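/- arXiv:math/0611633 — 7 statements merged into one kernel-verified Lean document; each statement's English description precedes it below -/
import Mathlib

section
/- Let r > 0 and n a positive integer. If f : [-r, 0] → ℂ is absolutely continuous, then the function h : [-r^n, 0] → ℂ defined by h(t) = f(-|t|^{1/n}) is absolutely continuous on [-r^n, 0]. -/
open Finset

/-- `f` is absolutely continuous on the interval `[a,b]`. -/
def ACOn (f : ℝ → ℂ) (a b : ℝ) : Prop :=
  ∀ ε > 0, ∃ δ > 0, ∀ (N : ℕ) (u v : Fin N → ℝ),
    (∀ i, a ≤ u i ∧ u i ≤ v i ∧ v i ≤ b) →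
    (Pairwise fun i j => Disjoint (Set.Ioo (u i) (v i)) (Set.Ioo (u j) (v j))) →
    (∑ i, (v i - u i)) < δ → (∑ i, ‖f (v i) - f (u i)‖) < ε

private lemma key_pow (n : ℕ) (b x y : ℝ) (hb : 0 ≤ b) (hby : b ≤ y) (hyx : y ≤ x) :
    (n : ℝ) * b ^ (n - 1) * (x - y) ≤ x ^ n - y ^ n := by
  rw [← geom_sum₂_mul x y n]
  apply mul_le_mul_of_nonneg_right _ (by linarith)
  have hbx : b ≤ x := hby.trans hyx
  calc (n : ℝ) * b ^ (n - 1) = ∑ _i ∈ range n, b ^ (n - 1) := by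
        simp [mul_comm]
    _ ≤ ∑ i ∈ range n, x ^ i * y ^ (n - 1 - i) := by
        refine Finset.sum_le_sum fun i hi => ?_
        have hin : i < n := Finset.mem_range.mp hi
        have h1 : b ^ (n - 1) = b ^ i * b ^ (n - 1 - i) := by
          rw [← pow_add]; congr 1; omega
        rw [h1]
        exact mul_le_mul (pow_le_pow_left₀ hb hbx i) (pow_le_pow_left₀ hb hby _)
          (pow_nonneg hb _) (pow_nonneg (hb.trans hbx) _)

/-- If `f ∈ AC([-r,0])` then `h(t) = f(-|t|^{1/n})` belongs to `AC([-r^n, 0])`. -/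
theorem stmt2 (r : ℝ) (hr : 0 < r) (n : ℕ) (hn : 0 < n) (f : ℝ → ℂ)
    (hf : ACOn f (-r) 0) :
    ACOn (fun t => f (-(|t| ^ ((n : ℝ)⁻¹)))) (-(r ^ n)) 0 := by
  intro ε hε
  obtain ⟨δ₁, hδ₁, H⟩ := hf ε hε
  set φ : ℝ → ℝ := fun t => -(|t| ^ ((n : ℝ)⁻¹)) with hφ
  have hninv : (0:ℝ) ≤ (n : ℝ)⁻¹ := by positivity
  have φmono : ∀ x y : ℝ, x ≤ y → y ≤ 0 → φ x ≤ φ y := by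
    intro x y hxy hy0
    simp only [hφ, neg_le_neg_iff]
    apply Real.rpow_le_rpow (abs_nonneg y) _ hninv
    rw [abs_of_nonpos hy0, abs_of_nonpos (hxy.trans hy0)]; linarith
  have φneg : ∀ x : ℝ, φ x ≤ 0 := fun x =>
    neg_nonpos.mpr (Real.rpow_nonneg (abs_nonneg x) _)
  have φval : ∀ b : ℝ, 0 ≤ b → φ (-(b ^ n)) = -b := by
    intro b hb
    simp only [hφ, abs_neg, abs_of_nonneg (pow_nonneg hb n),
      Real.pow_rpow_inv_natCast hb hn.ne']
  -- image-disjointness helper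
  have imgdisj : ∀ p q s t : ℝ, p ≤ 0 → q ≤ 0 → s ≤ 0 → t ≤ 0 → min q t ≤ max p s →
      min (φ q) (φ t) ≤ max (φ p) (φ s) := by
    intro p q s t hp hq hs ht h
    have h1 : min (φ q) (φ t) ≤ φ (min q t) := by
      rcases le_total q t with h'|h'
      · rw [min_eq_left h']; exact min_le_left _ _
      · rw [min_eq_right h']; exact min_le_right _ _
    have h2 : φ (max p s) ≤ max (φ p) (φ s) := by
      rcases le_total p s with h'|h'
      · rw [max_eq_right h']; exact le_max_right _ _
      · rw [max_eq_left h']; exact le_max_left _ _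
    exact le_trans (h1.trans (φmono _ _ h (max_le hp hs))) h2
  -- constants
  set b : ℝ := δ₁ / 4 with hbdef
  have hb : 0 < b := by positivity
  set a : ℝ := b ^ n with hadef
  have ha : 0 < a := pow_pos hb n
  have hφa : φ (-a) = -b := φval b hb.le
  set c : ℝ := (n : ℝ) * b ^ (n - 1) with hcdef
  have hc : 0 < c := by
    have : (0:ℝ) < (n:ℝ) := by exact_mod_cast hn
    positivity
  -- Lipschitz estimate on [-r^n, -a]
  have lip : ∀ p q : ℝ, p ≤ q → q ≤ -a → φ q - φ p ≤ (q - p) / c := by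
    intro p q hpq hqa
    have hq' : (0:ℝ) ≤ -q := by nlinarith
    have hp' : (0:ℝ) ≤ -p := by linarith
    set x : ℝ := (-p) ^ ((n : ℝ)⁻¹) with hxdef
    set y : ℝ := (-q) ^ ((n : ℝ)⁻¹) with hydef
    have hby : b ≤ y := by
      have : (b ^ n : ℝ) ^ ((n:ℝ)⁻¹) ≤ (-q) ^ ((n:ℝ)⁻¹) :=
        Real.rpow_le_rpow (pow_nonneg hb.le n) (by linarith) hninv
      rwa [Real.pow_rpow_inv_natCast hb.le hn.ne'] at this
    have hyx : y ≤ x := Real.rpow_le_rpow hq' (by linarith) hninv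
    have hxn : x ^ n = -p := Real.rpow_inv_natCast_pow hp' hn.ne'
    have hyn : y ^ n = -q := Real.rpow_inv_natCast_pow hq' hn.ne'
    have key := key_pow n b x y hb.le hby hyx
    rw [hxn, hyn] at key
    have hφq : φ q = -y := by
      simp only [hφ, hydef, abs_of_nonpos (by linarith : q ≤ 0)]
    have hφp : φ p = -x := by
      simp only [hφ, hxdef, abs_of_nonpos (by linarith : p ≤ 0)]
    rw [hφq, hφp]
    rw [le_div_iff₀ hc]
    nlinarith
  refine ⟨c * δ₁ / 4, by positivity, ?_⟩
  intro N u v huv hdisj hsum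
  have hu0 : ∀ i, u i ≤ 0 := fun i => (huv i).2.1.trans (huv i).2.2
  have hv0 : ∀ i, v i ≤ 0 := fun i => (huv i).2.2
  -- conditions for H
  have c1 : ∀ i, -r ≤ φ (u i) ∧ φ (u i) ≤ φ (v i) ∧ φ (v i) ≤ 0 := by
    intro i
    refine ⟨?_, φmono _ _ (huv i).2.1 (hv0 i), φneg _⟩
    have := φmono (-(r ^ n)) (u i) (huv i).1 (hu0 i)
    rwa [φval r hr.le] at this
  have c2 : Pairwise fun i j =>
      Disjoint (Set.Ioo (φ (u i)) (φ (v i))) (Set.Ioo (φ (u j)) (φ (v j))) := by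
    intro i j hij
    rw [Set.Ioo_disjoint_Ioo]
    exact imgdisj _ _ _ _ (hu0 i) (hv0 i) (hu0 j) (hv0 j)
      (Set.Ioo_disjoint_Ioo.mp (hdisj hij))
  -- splitting of each interval at -a
  have split : ∀ x : ℝ, φ (max x (-a)) + φ (min x (-a)) = φ x + φ (-a) := by
    intro x
    rcases le_total x (-a) with h|h
    · rw [max_eq_right h, min_eq_left h]; ring
    · rw [max_eq_left h, min_eq_right h]
  -- the inner sum (near 0) is bounded by b via measure theory
  set C : Fin N → ℝ := fun i => φ (max (u i) (-a)) with hC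
  set D : Fin N → ℝ := fun i => φ (max (v i) (-a)) with hD
  have hCD : ∀ i, C i ≤ D i := fun i =>
    φmono _ _ (max_le_max (huv i).2.1 le_rfl) (max_le (hv0 i) (by linarith))
  have hCb : ∀ i, -b ≤ C i := by
    intro i
    have := φmono (-a) (max (u i) (-a)) (le_max_right _ _)
      (max_le (hu0 i) (by linarith))
    rwa [hφa] at this
  have hD0 : ∀ i, D i ≤ 0 := fun i => φneg _
  have innerdisj : Pairwise (Function.onFun Disjoint fun i => Set.Ioo (C i) (D i)) := by
    intro i j hij
    have h : min (v i) (v j) ≤ max (u i) (u j) := Set.Ioo_disjoint_Ioo.mp (hdisj hij)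
    show Disjoint (Set.Ioo (C i) (D i)) (Set.Ioo (C j) (D j))
    rw [Set.Ioo_disjoint_Ioo]
    refine imgdisj _ _ _ _ (max_le (hu0 i) (by linarith)) (max_le (hv0 i) (by linarith))
      (max_le (hu0 j) (by linarith)) (max_le (hv0 j) (by linarith)) ?_
    -- min (max vi A) (max vj A) ≤ max (max ui A) (max uj A)
    calc min (max (v i) (-a)) (max (v j) (-a)) = max (min (v i) (v j)) (-a) := by
          rw [← sup_inf_right]
      _ ≤ max (max (u i) (u j)) (-a) := max_le_max h le_rfl
      _ = max (max (u i) (-a)) (max (u j) (-a)) := sup_sup_distrib_right _ _ _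
  have inner_bound : (∑ i, (D i - C i)) ≤ b := by
    have hofr : ENNReal.ofReal (∑ i, (D i - C i)) = ∑ i, ENNReal.ofReal (D i - C i) :=
      ENNReal.ofReal_sum_of_nonneg fun i _ => sub_nonneg.mpr (hCD i)
    have hvol : ∀ i, ENNReal.ofReal (D i - C i) = MeasureTheory.volume (Set.Ioo (C i) (D i)) :=
      fun i => (Real.volume_Ioo).symm
    have hmeas : MeasureTheory.volume (⋃ i, Set.Ioo (C i) (D i)) =
        ∑' i, MeasureTheory.volume (Set.Ioo (C i) (D i)) :=
      MeasureTheory.measure_iUnion innerdisj fun i => measurableSet_Ioo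
    have hsub : (⋃ i, Set.Ioo (C i) (D i)) ⊆ Set.Icc (-b) 0 := by
      refine Set.iUnion_subset fun i => ?_
      exact (Set.Ioo_subset_Icc_self).trans (Set.Icc_subset_Icc (hCb i) (hD0 i))
    have : ENNReal.ofReal (∑ i, (D i - C i)) ≤ ENNReal.ofReal b := by
      rw [hofr]
      simp_rw [hvol]
      rw [← tsum_fintype (L := SummationFilter.unconditional _), ← hmeas]
      calc MeasureTheory.volume (⋃ i, Set.Ioo (C i) (D i))
          ≤ MeasureTheory.volume (Set.Icc (-b) 0) := MeasureTheory.measure_mono hsub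
        _ = ENNReal.ofReal b := by rw [Real.volume_Icc]; norm_num
    exact (ENNReal.ofReal_le_ofReal_iff hb.le).mp this
  -- the outer sum (Lipschitz part)
  have outer_bound : (∑ i, (φ (min (v i) (-a)) - φ (min (u i) (-a)))) < δ₁ / 4 := by
    have step : ∀ i, φ (min (v i) (-a)) - φ (min (u i) (-a)) ≤ (v i - u i) / c := by
      intro i
      have h1 : φ (min (v i) (-a)) - φ (min (u i) (-a))
          ≤ (min (v i) (-a) - min (u i) (-a)) / c :=
        lip _ _ (min_le_min (huv i).2.1 le_rfl) (min_le_right _ _)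
      have h2 : min (v i) (-a) - min (u i) (-a) ≤ v i - u i := by
        rcases le_total (v i) (-a) with h|h <;> rcases le_total (u i) (-a) with h'|h' <;>
          simp [min_eq_left, min_eq_right, h, h'] <;> linarith [(huv i).2.1]
      exact h1.trans (by apply div_le_div_of_nonneg_right h2 hc.le |>.trans le_rfl)
    calc (∑ i, (φ (min (v i) (-a)) - φ (min (u i) (-a))))
        ≤ ∑ i, (v i - u i) / c := Finset.sum_le_sum fun i _ => step i
      _ = (∑ i, (v i - u i)) / c := by rw [Finset.sum_div]
      _ < (c * δ₁ / 4) / c := by exact div_lt_div_of_pos_right hsum hc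
      _ = δ₁ / 4 := by field_simp
  -- total sum bound
  have c3 : (∑ i, (φ (v i) - φ (u i))) < δ₁ := by
    have eq1 : ∀ i, φ (v i) - φ (u i) =
        (D i - C i) + (φ (min (v i) (-a)) - φ (min (u i) (-a))) := by
      intro i
      have h1 := split (v i)
      have h2 := split (u i)
      simp only [hC, hD]
      linarith
    calc (∑ i, (φ (v i) - φ (u i)))
        = (∑ i, (D i - C i)) + ∑ i, (φ (min (v i) (-a)) - φ (min (u i) (-a))) := by
          rw [← Finset.sum_add_distrib]; exact Finset.sum_congr rfl fun i _ => eq1 i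
      _ < b + δ₁ / 4 := by
          have := inner_bound; linarith [outer_bound]
      _ ≤ δ₁ := by rw [hbdef]; linarith
  have := H N (fun i => φ (u i)) (fun i => φ (v i)) c1 c2 c3
  simpa [hφ] using this
end

section
/- Let I ⊆ ℝ be an interval and let a_1, ..., a_n : I → ℂ be continuous coefficients of the monic polynomial curve P(t)(z) = z^n + Σ_{j=1}^n (-1)^j a_j(t) z^{n-j}. Suppose μ_1, ..., μ_n : I → ℂ is a parameterization of the roots of P(t) (i.e., for each t, P(t)(z) = Π_j (z - μ_j(t))) in which each μ_i is Lipschitz with a common Lipschitz constant C. Then any continuous function λ : I → ℂ such that λ(t) is a root of P(t) for every t is Lipschitz with constant C. -/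
open Finset

/-- If the roots of the monic polynomial curve
`P(t)(z) = z^n + ∑_{j=1}^n (-1)^j a_j(t) z^{n-j}` (with continuous coefficients on the
interval `I`) admit a parameterization `μ_1, …, μ_n` that is Lipschitz with common constant `C`,
then any continuous root `λ` of `P` is Lipschitz with constant `C`. -/
theorem stmt4 (n : ℕ) (I : Set ℝ) (hI : I.OrdConnected)
    (a : Fin n → ℝ → ℂ) (ha : ∀ j, ContinuousOn (a j) I)
    (μ : Fin n → ℝ → ℂ) (C : ℝ)
    (hroots : ∀ t ∈ I, ∀ z : ℂ,
      z ^ n + ∑ j : Fin n, (-1 : ℂ) ^ (j.1 + 1) * a j t * z ^ (n - 1 - j.1)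
        = ∏ j : Fin n, (z - μ j t))
    (hLip : ∀ j, ∀ s ∈ I, ∀ t ∈ I, ‖μ j s - μ j t‖ ≤ C * |s - t|)
    (lam : ℝ → ℂ) (hcont : ContinuousOn lam I)
    (hlam : ∀ t ∈ I,
      (lam t) ^ n + ∑ j : Fin n, (-1 : ℂ) ^ (j.1 + 1) * a j t * (lam t) ^ (n - 1 - j.1) = 0) :
    ∀ s ∈ I, ∀ t ∈ I, ‖lam s - lam t‖ ≤ C * |s - t| := by
  classical
  have hroot : ∀ u ∈ I, ∃ j : Fin n, lam u = μ j u := by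
    intro u hu
    have h1 := hroots u hu (lam u)
    have h2 := hlam u hu
    rw [h2] at h1
    obtain ⟨j, -, hj⟩ := Finset.prod_eq_zero_iff.mp h1.symm
    exact ⟨j, by linear_combination hj⟩
  -- main statement for s ≤ t
  suffices H : ∀ s ∈ I, ∀ t ∈ I, s ≤ t → ‖lam t - lam s‖ ≤ C * (t - s) by
    intro s hs t ht
    rcases le_total s t with hle | hle
    · rw [abs_sub_comm, abs_of_nonneg (by linarith : (0:ℝ) ≤ t - s),
        ← norm_neg, neg_sub]
      exact H s hs t ht hle
    · rw [abs_of_nonneg (by linarith : (0:ℝ) ≤ s - t)]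
      exact H t ht s hs hle
  intro s hs t ht hle
  rcases eq_or_lt_of_le hle with rfl | hlt
  · simp
  have hC : 0 ≤ C := by
    obtain ⟨j, -⟩ := hroot s hs
    have h1 := hLip j s hs t ht
    have h2 : (0:ℝ) ≤ ‖μ j s - μ j t‖ := norm_nonneg _
    have h3 : 0 < |s - t| := abs_pos.mpr (sub_ne_zero.mpr hlt.ne)
    nlinarith
  have hK : Set.Icc s t ⊆ I := hI.out hs ht
  set E : Set ℝ := {u | u ∈ Set.Icc s t ∧ ‖lam u - lam s‖ ≤ C * (u - s)} with hE
  have hsE : s ∈ E := ⟨⟨le_refl s, hle⟩, by simp⟩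
  have hEne : E.Nonempty := ⟨s, hsE⟩
  have hEbdd : BddAbove E := ⟨t, fun x hx => hx.1.2⟩
  have hEclosed : IsClosed E := by
    have hg : ContinuousOn (fun u => ‖lam u - lam s‖ - C * (u - s)) (Set.Icc s t) :=
      ((continuous_norm.comp_continuousOn
        ((hcont.mono hK).sub continuousOn_const)).sub
        (continuousOn_const.mul (continuousOn_id.sub continuousOn_const)))
    have : E = Set.Icc s t ∩ (fun u => ‖lam u - lam s‖ - C * (u - s)) ⁻¹' (Set.Iic 0) := by
      ext u
      simp only [hE, Set.mem_setOf_eq, Set.mem_inter_iff, Set.mem_preimage, Set.mem_Iic]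
      constructor
      · rintro ⟨h1, h2⟩; exact ⟨h1, by linarith⟩
      · rintro ⟨h1, h2⟩; exact ⟨h1, by linarith⟩
    rw [this]
    exact hg.preimage_isClosed_of_isClosed isClosed_Icc isClosed_Iic
  set w := sSup E with hw
  have hwE : w ∈ E := hEclosed.csSup_mem hEne hEbdd
  have hwt : w ≤ t := hwE.1.2
  rcases eq_or_lt_of_le hwt with heq | hwlt
  · -- done: t ∈ E
    have := hwE.2
    rw [heq] at this
    exact this
  -- derive a contradiction: can extend past w
  exfalso
  have hwI : w ∈ I := hK hwE.1
  obtain ⟨k, hk⟩ := hroot w hwI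
  obtain ⟨δ0, hδ0pos, hδ0⟩ : ∃ δ0 > 0, ∀ j : Fin n, μ j w ≠ lam w →
      δ0 ≤ ‖μ j w - lam w‖ := by
    by_cases hT : ∃ j : Fin n, μ j w ≠ lam w
    · set T := Finset.univ.filter (fun j : Fin n => μ j w ≠ lam w) with hTdef
      have hTne : T.Nonempty := by
        obtain ⟨j, hj⟩ := hT
        exact ⟨j, Finset.mem_filter.mpr ⟨Finset.mem_univ _, hj⟩⟩
      refine ⟨T.inf' hTne (fun j => ‖μ j w - lam w‖), ?_, ?_⟩
      · obtain ⟨j0, hj0mem, hj0⟩ := T.exists_mem_eq_inf' hTne (fun j => ‖μ j w - lam w‖)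
        rw [hj0]
        have : μ j0 w ≠ lam w := (Finset.mem_filter.mp hj0mem).2
        exact norm_pos_iff.mpr (sub_ne_zero.mpr this)
      · intro j hj
        exact Finset.inf'_le (fun j => ‖μ j w - lam w‖)
          (Finset.mem_filter.mpr ⟨Finset.mem_univ j, hj⟩)
    · exact ⟨1, one_pos, fun j hj => absurd ⟨j, hj⟩ hT⟩
  have hcu : ContinuousWithinAt lam I w := hcont w hwI
  rw [Metric.continuousWithinAt_iff] at hcu
  obtain ⟨δ, hδpos, hδ⟩ := hcu (δ0 / 3) (by positivity)
  set δ' := min (δ / 2) (δ0 / (3 * (C + 1))) with hδ'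
  have hδ'pos : 0 < δ' := lt_min (by positivity) (by positivity)
  have hCδ' : C * δ' ≤ δ0 / 3 := by
    have h1 : δ' ≤ δ0 / (3 * (C + 1)) := min_le_right _ _
    have h2 : C * δ' ≤ C * (δ0 / (3 * (C + 1))) := mul_le_mul_of_nonneg_left h1 hC
    have h3 : C * (δ0 / (3 * (C + 1))) ≤ δ0 / 3 := by
      have key : δ0 / (3 * (C + 1)) * (3 * (C + 1)) = δ0 := div_mul_cancel₀ _ (by positivity)
      have hx : (0:ℝ) ≤ δ0 / (3 * (C + 1)) := by positivity
      nlinarith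
    linarith
  set u := min t (w + δ') with hu
  have hwu : w < u := lt_min hwlt (by linarith)
  have hut : u ≤ t := min_le_left _ _
  have huw : u - w ≤ δ' := by
    have : u ≤ w + δ' := min_le_right _ _
    linarith
  have huIcc : u ∈ Set.Icc s t := ⟨le_trans hwE.1.1 hwu.le, hut⟩
  have huI : u ∈ I := hK huIcc
  have hdist : dist u w < δ := by
    rw [Real.dist_eq, abs_of_nonneg (by linarith)]
    have : δ' ≤ δ / 2 := min_le_left _ _
    linarith
  have hlamclose : ‖lam u - lam w‖ < δ0 / 3 := by
    have := hδ huI hdist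
    rwa [Complex.dist_eq] at this
  obtain ⟨j, hj⟩ := hroot u huI
  have hμLip : ‖μ j u - μ j w‖ ≤ C * δ' := by
    have := hLip j u huI w hwI
    rw [abs_of_nonneg (by linarith)] at this
    calc ‖μ j u - μ j w‖ ≤ C * (u - w) := this
      _ ≤ C * δ' := mul_le_mul_of_nonneg_left huw hC
  have hjw : μ j w = lam w := by
    by_contra hne
    have h1 := hδ0 j hne
    have h2 : ‖μ j w - lam w‖ ≤
        ‖μ j w - μ j u‖ + ‖μ j u - lam w‖ :=
      norm_sub_le_norm_sub_add_norm_sub _ _ _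
    have h3 : ‖μ j u - lam w‖ = ‖lam u - lam w‖ := by rw [hj]
    have h4 : ‖μ j w - μ j u‖ = ‖μ j u - μ j w‖ := by
      rw [← norm_neg, neg_sub]
    have := hμLip
    linarith [hlamclose, hCδ']
  -- u ∈ E
  have huE : u ∈ E := by
    refine ⟨huIcc, ?_⟩
    have h2 : ‖lam u - lam s‖ ≤
        ‖lam u - lam w‖ + ‖lam w - lam s‖ :=
      norm_sub_le_norm_sub_add_norm_sub _ _ _
    have h3 : ‖lam u - lam w‖ ≤ C * (u - w) := by
      rw [hj, ← hjw]
      have := hLip j u huI w hwI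
      rwa [abs_of_nonneg (by linarith)] at this
    have h4 := hwE.2
    calc ‖lam u - lam s‖ ≤ C * (u - w) + C * (w - s) := by linarith
      _ = C * (u - s) := by ring
  have : u ≤ w := le_csSup hEbdd huE
  linarith
end

section
/- For real or complex numbers λ_1, ..., λ_n, the determinant Δ_k of the k×k upper-left minor of the Bezoutiant matrix B = (s_{i+j-2})_{1≤i,j≤n}, where s_m = Σ_{j=1}^n λ_j^m are the Newton power sums (with s_0 = n), equals Σ_{i_1 < i_2 < ... < i_k} Π_{p < q} (λ_{i_p} - λ_{i_q})^2, where the sum is over all k-element subsets {i_1,...,i_k} of {1,...,n}. -/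
open Finset

/-- `Δ_k(λ) = ∑_{i_1 < ⋯ < i_k} ∏_{p<q} (λ_{i_p} - λ_{i_q})²`, the sum over all
`k`-element subsets of the indices. -/
noncomputable def delta (n k : ℕ) (lam : Fin n → ℂ) : ℂ :=
  ∑ S ∈ Finset.powersetCard k (Finset.univ : Finset (Fin n)),
    ∏ p ∈ S, ∏ q ∈ S.filter (fun q => p < q), (lam p - lam q) ^ 2

/-- Sum over permutations of a power-sum weight times a Vandermonde product is the
squared Vandermonde. -/
private lemma vdm_sq_sum {n k : ℕ} (g : Fin k → Fin n) (lam : Fin n → ℂ) :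
    ∑ σ : Equiv.Perm (Fin k),
      (∏ i : Fin k, lam (g (σ i)) ^ (i : ℕ)) *
        ∏ i : Fin k, ∏ j ∈ Ioi i, (lam (g (σ j)) - lam (g (σ i)))
      = (∏ i : Fin k, ∏ j ∈ Ioi i, (lam (g j) - lam (g i))) ^ 2 := by
  set D : ℂ := ∏ i : Fin k, ∏ j ∈ Ioi i, (lam (g j) - lam (g i)) with hD
  have key : ∀ σ : Equiv.Perm (Fin k),
      ∏ i : Fin k, ∏ j ∈ Ioi i, (lam (g (σ j)) - lam (g (σ i)))
        = (Equiv.Perm.sign σ : ℤ) * D := by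
    intro σ
    have h1 : ((Matrix.vandermonde fun i => lam (g i)).submatrix σ id)
        = Matrix.vandermonde fun i => lam (g (σ i)) := by
      ext i j; simp [Matrix.vandermonde]
    have h2 := Matrix.det_permute σ (Matrix.vandermonde fun i => lam (g i))
    rw [h1, Matrix.det_vandermonde, Matrix.det_vandermonde] at h2
    exact_mod_cast h2
  have hdet : ∑ σ : Equiv.Perm (Fin k),
      ((Equiv.Perm.sign σ : ℤ) : ℂ) * ∏ i : Fin k, lam (g (σ i)) ^ (i : ℕ) = D := by
    rw [hD, ← Matrix.det_vandermonde fun i => lam (g i), Matrix.det_apply]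
    simp [Units.smul_def, zsmul_eq_mul, Matrix.vandermonde]
  calc ∑ σ : Equiv.Perm (Fin k),
      (∏ i : Fin k, lam (g (σ i)) ^ (i : ℕ)) *
        ∏ i : Fin k, ∏ j ∈ Ioi i, (lam (g (σ j)) - lam (g (σ i)))
      = ∑ σ : Equiv.Perm (Fin k),
        (((Equiv.Perm.sign σ : ℤ) : ℂ) * ∏ i : Fin k, lam (g (σ i)) ^ (i : ℕ)) * D := by
        refine Finset.sum_congr rfl fun σ _ => ?_
        rw [key σ]; ring
    _ = (∑ σ : Equiv.Perm (Fin k),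
        ((Equiv.Perm.sign σ : ℤ) : ℂ) * ∏ i : Fin k, lam (g (σ i)) ^ (i : ℕ)) * D := by
        rw [Finset.sum_mul]
    _ = D ^ 2 := by rw [hdet, sq]

/-- Reindexing the squared Vandermonde product over a `k`-subset. -/
private lemma prod_pairs {n k : ℕ} (lam : Fin n → ℂ) (S : Finset (Fin n)) (hS : S.card = k) :
    (∏ i : Fin k, ∏ j ∈ Ioi i,
        (lam (S.orderIsoOfFin hS j) - lam (S.orderIsoOfFin hS i))) ^ 2
      = ∏ p ∈ S, ∏ q ∈ S.filter (fun q => p < q), (lam p - lam q) ^ 2 := by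
  set e := S.orderIsoOfFin hS with he
  rw [← Finset.prod_pow]
  simp_rw [← Finset.prod_pow]
  rw [Finset.prod_sigma', Finset.prod_sigma']
  refine Finset.prod_bij (fun x _ => ⟨(e x.1 : Fin n), (e x.2 : Fin n)⟩) ?_ ?_ ?_ ?_
  · rintro ⟨i, j⟩ hij
    simp only [Finset.mem_sigma, Finset.mem_univ, Finset.mem_Ioi, true_and] at hij
    simp only [Finset.mem_sigma, Finset.mem_filter]
    exact ⟨(e i).2, (e j).2, by exact_mod_cast e.strictMono hij⟩
  · rintro ⟨i, j⟩ hij ⟨i', j'⟩ hij' h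
    simp only [Sigma.mk.inj_iff] at h
    have h1 : (e i : Fin n) = (e i' : Fin n) := h.1
    have h2 : (e j : Fin n) = (e j' : Fin n) := eq_of_heq h.2
    have : e i = e i' := Subtype.coe_injective h1
    have : i = i' := e.injective this
    subst this
    have : e j = e j' := Subtype.coe_injective h2
    have : j = j' := e.injective this
    subst this
    rfl
  · rintro ⟨p, q⟩ hpq
    simp only [Finset.mem_sigma, Finset.mem_filter] at hpq
    obtain ⟨hp, hq, hlt⟩ := hpq
    refine ⟨⟨e.symm ⟨p, hp⟩, e.symm ⟨q, hq⟩⟩, ?_, ?_⟩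
    · simp only [Finset.mem_sigma, Finset.mem_univ, Finset.mem_Ioi, true_and]
      have : (⟨p, hp⟩ : {x // x ∈ S}) < ⟨q, hq⟩ := by exact_mod_cast hlt
      exact e.symm.strictMono this
    · simp only [Sigma.mk.inj_iff]
      constructor
      · simp
      · simp
  · rintro ⟨i, j⟩ hij
    have : (lam (e j) - lam (e i)) ^ 2 = (lam (e i) - lam (e j)) ^ 2 := by ring
    simpa using this

/-- The determinant of the `k×k` upper-left minor of the Bezoutiant `B = (s_{i+j-2})`
(where `s_m = ∑_j λ_j^m`, `s_0 = n`) equals `Σ_{i_1<⋯<i_k} Π_{p<q}(λ_{i_p}-λ_{i_q})²`. -/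
theorem stmt5 (n k : ℕ) (hk : k ≤ n) (lam : Fin n → ℂ) :
    Matrix.det (Matrix.of fun i j : Fin k => ∑ l : Fin n, lam l ^ (i.1 + j.1))
      = delta n k lam := by
  classical
  set T : (Fin k → Fin n) → ℂ := fun f =>
    (∏ i : Fin k, lam (f i) ^ (i : ℕ)) *
      ∏ i : Fin k, ∏ j ∈ Ioi i, (lam (f j) - lam (f i)) with hT
  -- Step 1: multilinear expansion of the determinant
  have h1 : Matrix.det (Matrix.of fun i j : Fin k => ∑ l : Fin n, lam l ^ (i.1 + j.1))
      = ∑ f : Fin k → Fin n, T f := by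
    have hM : (Matrix.of fun i j : Fin k => ∑ l : Fin n, lam l ^ (i.1 + j.1))
        = fun i : Fin k => ∑ l : Fin n, (lam l ^ (i : ℕ)) • (fun j : Fin k => lam l ^ (j : ℕ)) := by
      funext i j
      simp [Finset.sum_apply, pow_add]
    show Matrix.detRowAlternating _ = _
    rw [hM, ← AlternatingMap.coe_multilinearMap, MultilinearMap.map_sum]
    refine Finset.sum_congr rfl fun f _ => ?_
    rw [MultilinearMap.map_smul_univ]
    have hv : ((Matrix.detRowAlternating (R := ℂ) (n := Fin k)).toMultilinearMap
          (fun i : Fin k => fun j : Fin k => lam (f i) ^ (j : ℕ)) : ℂ)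
        = Matrix.det (Matrix.vandermonde fun i => lam (f i)) := rfl
    rw [hv, smul_eq_mul, Matrix.det_vandermonde]
  rw [h1]
  -- Step 2: non-injective terms vanish
  have h2 : ∑ f : Fin k → Fin n, T f
      = ∑ f ∈ Finset.univ.filter (fun f : Fin k → Fin n => Function.Injective f), T f := by
    symm
    apply Finset.sum_filter_of_ne
    intro f _ hTf
    by_contra hinj
    apply hTf
    rw [Function.not_injective_iff] at hinj
    obtain ⟨a, b, hab, hne⟩ := hinj
    have hzero : ∏ i : Fin k, ∏ j ∈ Ioi i, (lam (f j) - lam (f i)) = 0 := by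
      rcases hne.lt_or_gt with h | h
      · exact Finset.prod_eq_zero (Finset.mem_univ a)
          (Finset.prod_eq_zero (Finset.mem_Ioi.mpr h) (by rw [hab, sub_self]))
      · exact Finset.prod_eq_zero (Finset.mem_univ b)
          (Finset.prod_eq_zero (Finset.mem_Ioi.mpr h) (by rw [← hab, sub_self]))
    show (∏ i : Fin k, lam (f i) ^ (i : ℕ)) *
      (∏ i : Fin k, ∏ j ∈ Ioi i, (lam (f j) - lam (f i))) = 0
    rw [hzero, mul_zero]
  rw [h2]
  -- the enumeration of a k-subset, totalized
  set E : Finset (Fin n) → Fin k → Fin n := fun S x =>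
    if h : S.card = k then (S.orderIsoOfFin h x : Fin n) else Fin.castLE hk x with hE
  have hEeq : ∀ (S : Finset (Fin n)) (h : S.card = k) (x : Fin k),
      E S x = (S.orderIsoOfFin h x : Fin n) := by
    intro S h x; simp [hE, h]
  have himg : ∀ (S : Finset (Fin n)) (h : S.card = k) (σ : Equiv.Perm (Fin k)),
      Finset.univ.image (fun x => E S (σ x)) = S := by
    intro S h σ
    ext y
    simp only [Finset.mem_image, Finset.mem_univ, true_and]
    constructor
    · rintro ⟨x, rfl⟩
      rw [hEeq S h]
      exact ((S.orderIsoOfFin h) (σ x)).2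
    · intro hy
      refine ⟨σ.symm ((S.orderIsoOfFin h).symm ⟨y, hy⟩), ?_⟩
      rw [hEeq S h]
      simp
  -- Step 3: bijection between (subset, permutation) pairs and injective maps
  have h3 : ∑ p ∈ (Finset.powersetCard k (Finset.univ : Finset (Fin n))) ×ˢ
        (Finset.univ : Finset (Equiv.Perm (Fin k))),
        T (fun x => E p.1 (p.2 x))
      = ∑ f ∈ Finset.univ.filter (fun f : Fin k → Fin n => Function.Injective f), T f := by
    refine Finset.sum_bij (fun p _ => fun x => E p.1 (p.2 x)) ?_ ?_ ?_ ?_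
    · rintro ⟨S, σ⟩ hp
      simp only [Finset.mem_product, Finset.mem_powersetCard_univ] at hp
      have hS := hp.1
      simp only [Finset.mem_filter, Finset.mem_univ, true_and]
      intro a b hab
      simp only [hEeq _ hS] at hab
      have := Subtype.coe_injective hab
      exact σ.injective ((S.orderIsoOfFin hS).injective this)
    · rintro ⟨S, σ⟩ hp ⟨S', σ'⟩ hp' h
      simp only [Finset.mem_product, Finset.mem_powersetCard_univ] at hp hp'
      have hS := hp.1
      have hS' := hp'.1
      have h' : (fun x => E S (σ x)) = (fun x => E S' (σ' x)) := h
      have hSS : S = S' := by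
        rw [← himg S hS σ, ← himg S' hS' σ', h']
      subst hSS
      have hσσ : σ = σ' := by
        ext x
        have := congrFun h' x
        simp only [hEeq _ hS] at this
        exact congrArg Fin.val ((S.orderIsoOfFin hS).injective (Subtype.coe_injective this))
      rw [hσσ]
    · intro f hf
      simp only [Finset.mem_filter, Finset.mem_univ, true_and] at hf
      set S := Finset.univ.image f with hSdef
      have hS : S.card = k := by
        rw [hSdef, Finset.card_image_of_injective _ hf, Finset.card_univ, Fintype.card_fin]
      have hmem : ∀ x, f x ∈ S := fun x => Finset.mem_image_of_mem f (Finset.mem_univ x)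
      set σ0 : Fin k → Fin k := fun x => (S.orderIsoOfFin hS).symm ⟨f x, hmem x⟩ with hσ0
      have hσ0inj : Function.Injective σ0 := by
        intro a b hab
        apply hf
        have := (S.orderIsoOfFin hS).symm.injective hab
        exact Subtype.mk_eq_mk.mp this
      have hσ0bij : Function.Bijective σ0 := Finite.injective_iff_bijective.mp hσ0inj
      refine ⟨⟨S, Equiv.ofBijective σ0 hσ0bij⟩, ?_, ?_⟩
      · simp [Finset.mem_product, Finset.mem_powersetCard_univ, hS]
      · funext x
        simp only [Equiv.ofBijective_apply, hσ0]
        rw [hEeq _ hS]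
        simp
    · intros; rfl
  rw [← h3, Finset.sum_product]
  -- Step 4: inner sum over permutations gives the squared Vandermonde
  unfold delta
  refine Finset.sum_congr rfl fun S hS => ?_
  rw [Finset.mem_powersetCard_univ] at hS
  have : ∀ σ : Equiv.Perm (Fin k),
      T (fun x => E S (σ x))
      = (∏ i : Fin k, lam ((S.orderIsoOfFin hS) (σ i)) ^ (i : ℕ)) *
        ∏ i : Fin k, ∏ j ∈ Ioi i,
          (lam ((S.orderIsoOfFin hS) (σ j)) - lam ((S.orderIsoOfFin hS) (σ i))) := by
    intro σ
    rw [hT]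
    simp only [hEeq _ hS]
  simp_rw [this]
  rw [vdm_sq_sum (fun x => ((S.orderIsoOfFin hS) x : Fin n)) lam]
  exact prod_pairs lam S hS
end

section
/- Let f : ℝ → ℂ be a continuous function defined near 0, of class C^n, and suppose the multiplicity m(f) of f at 0 (the supremum of integers p such that f(t) = t^p g(t) near 0 for some continuous g) satisfies m(f) < n. Then there exists a C^{n - m(f)} function g defined near 0 with g(0) ≠ 0 and f(t) = t^{m(f)} g(t) near 0. -/
open Filter Topology Set MeasureTheory intervalIntegral

/-- One-step Hadamard lemma on a symmetric interval. -/
lemma hadamard_step {a : ℝ} (ha : 0 < a) (k : ℕ) (f : ℝ → ℂ)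
    (hf : ContDiffOn ℝ (k + 1) f (Ioo (-a) a)) (hf0 : f 0 = 0) :
    ∃ g : ℝ → ℂ, ContDiffOn ℝ k g (Ioo (-a) a) ∧
      ∀ t ∈ Ioo (-a) a, f t = (t : ℂ) * g t := by
  set I : Set ℝ := Ioo (-a) a with hI
  have hIopen : IsOpen I := isOpen_Ioo
  have h0I : (0 : ℝ) ∈ I := ⟨by linarith, ha⟩
  have hmemI : ∀ {t : ℝ}, t ∈ I ↔ |t| < a := by
    intro t; rw [hI, Set.mem_Ioo, abs_lt]
  have hstI : ∀ {s t : ℝ}, s ∈ Icc (0:ℝ) 1 → t ∈ I → s * t ∈ I := by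
    intro s t hs ht
    rw [hmemI] at ht ⊢
    rw [abs_mul]
    calc |s| * |t| ≤ 1 * |t| := by
          apply mul_le_mul_of_nonneg_right _ (abs_nonneg t)
          rw [abs_le]; constructor <;> [linarith [hs.1]; exact hs.2]
      _ = |t| := one_mul _
      _ < a := ht
  -- smoothness of iterated derivatives
  have hD : ∀ j : ℕ, j ≤ k + 1 → ContDiffOn ℝ (↑(k + 1 - j)) (iteratedDeriv j f) I := by
    intro j
    induction j with
    | zero => intro _; simpa using hf
    | succ j ih =>
      intro hj
      rw [iteratedDeriv_succ]
      refine (ih (by omega)).deriv_of_isOpen hIopen ?_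
      have : k + 1 - j = (k + 1 - (j+1)) + 1 := by omega
      rw [this]
      push_cast
      exact le_refl _
  have hDcont : ∀ j : ℕ, j ≤ k + 1 → ContinuousOn (iteratedDeriv j f) I := by
    intro j hj; exact (hD j hj).continuousOn
  have hDderiv : ∀ j : ℕ, j ≤ k → ∀ x ∈ I,
      HasDerivAt (iteratedDeriv j f) (iteratedDeriv (j+1) f x) x := by
    intro j hj x hx
    have h1 : DifferentiableOn ℝ (iteratedDeriv j f) I := by
      apply (hD j (by omega)).differentiableOn
      have : 1 ≤ k + 1 - j := by omega
      exact_mod_cast (show k + 1 - j ≠ 0 by omega)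
    have h2 : DifferentiableAt ℝ (iteratedDeriv j f) x :=
      h1.differentiableAt (hIopen.mem_nhds hx)
    have := h2.hasDerivAt
    rwa [show deriv (iteratedDeriv j f) x = iteratedDeriv (j+1) f x by
      rw [iteratedDeriv_succ]] at this
  -- the integral candidates
  set G : ℕ → ℝ → ℂ := fun j t => ∫ s in (0:ℝ)..1, s ^ j • iteratedDeriv (j+1) f (s * t)
    with hG
  -- continuity in s of the integrand
  have hcontS : ∀ (j : ℕ), j + 1 ≤ k + 1 → ∀ t ∈ I,
      ContinuousOn (fun s : ℝ => s ^ j • iteratedDeriv (j+1) f (s * t)) (Icc (0:ℝ) 1) := by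
    intro j hj t ht
    apply ContinuousOn.smul (continuous_pow j).continuousOn
    apply (hDcont (j+1) hj).comp (continuous_mul_right t).continuousOn
    intro s hs; exact hstI hs ht
  have hmeas : ∀ (j : ℕ), j + 1 ≤ k + 1 → ∀ t ∈ I,
      AEStronglyMeasurable (fun s : ℝ => s ^ j • iteratedDeriv (j+1) f (s * t))
        (volume.restrict (Set.uIoc (0:ℝ) 1)) := by
    intro j hj t ht
    apply ContinuousOn.aestronglyMeasurable _ measurableSet_uIoc
    apply (hcontS j hj t ht).mono
    rw [uIoc_of_le (by norm_num : (0:ℝ) ≤ 1)]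
    exact Ioc_subset_Icc_self
  -- local compact neighbourhoods
  have hloc : ∀ t₀ ∈ I, ∃ ε > 0, Metric.closedBall t₀ ε ⊆ I ∧
      (∀ x ∈ Metric.closedBall t₀ ε, ∀ s ∈ Icc (0:ℝ) 1, s * x ∈ Icc (-(|t₀| + ε)) (|t₀| + ε)) ∧
      Icc (-(|t₀| + ε)) (|t₀| + ε) ⊆ I := by
    intro t₀ ht₀
    obtain ⟨ε, hε, hball⟩ := Metric.nhds_basis_closedBall.mem_iff.mp (hIopen.mem_nhds ht₀)
    refine ⟨ε, hε, hball, ?_, ?_⟩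
    · intro x hx s hs
      rw [Metric.mem_closedBall, Real.dist_eq] at hx
      have hxb : |x| ≤ |t₀| + ε := by
        calc |x| = |t₀ + (x - t₀)| := by ring_nf
          _ ≤ |t₀| + |x - t₀| := abs_add_le _ _
          _ ≤ |t₀| + ε := by linarith
      have : |s * x| ≤ |t₀| + ε := by
        rw [abs_mul]
        calc |s| * |x| ≤ 1 * |x| := by
              apply mul_le_mul_of_nonneg_right _ (abs_nonneg x)
              rw [abs_le]; constructor <;> [linarith [hs.1]; exact hs.2]
          _ = |x| := one_mul _
          _ ≤ |t₀| + ε := hxb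
      exact mem_Icc.mpr (abs_le.mp this)
    · intro y hy
      rw [hmemI]
      have h1 : t₀ + ε ∈ I := hball (by
        rw [Metric.mem_closedBall, Real.dist_eq,
          show t₀ + ε - t₀ = ε by ring, abs_of_nonneg hε.le])
      have h2 : t₀ - ε ∈ I := hball (by
        rw [Metric.mem_closedBall, Real.dist_eq,
          show t₀ - ε - t₀ = -ε by ring, abs_neg, abs_of_nonneg hε.le])
      rw [hmemI] at h1 h2
      have hb : |t₀| + ε < a := by
        rcases abs_cases t₀ with ⟨h, _⟩ | ⟨h, _⟩
        · rw [h]; have := (abs_lt.mp h1).2; linarith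
        · rw [h]; have := (abs_lt.mp h2).1; linarith
      have := abs_le.mpr ⟨(mem_Icc.mp hy).1, (mem_Icc.mp hy).2⟩
      linarith [abs_nonneg y, this]
  -- continuity of G j
  have hGcont : ∀ j : ℕ, j ≤ k → ContinuousOn (G j) I := by
    intro j hj t₀ ht₀
    apply ContinuousAt.continuousWithinAt
    obtain ⟨ε, hε, hball, hmap, hsub⟩ := hloc t₀ ht₀
    obtain ⟨M, hM⟩ := isCompact_Icc.exists_bound_of_continuousOn
      ((hDcont (j+1) (by omega)).mono hsub)
    apply intervalIntegral.continuousAt_of_dominated_interval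
      (bound := fun _ => M) (μ := volume)
    · filter_upwards [hIopen.mem_nhds ht₀] with x hx
      exact hmeas j (by omega) x hx
    · filter_upwards [Metric.closedBall_mem_nhds t₀ hε] with x hx
      apply ae_of_all
      intro s hs
      rw [uIoc_of_le (by norm_num : (0:ℝ) ≤ 1)] at hs
      have hs' : s ∈ Icc (0:ℝ) 1 := Ioc_subset_Icc_self hs
      rw [norm_smul]
      calc ‖s ^ j‖ * ‖iteratedDeriv (j+1) f (s * x)‖
          ≤ 1 * M := by
            apply mul_le_mul _ (hM _ (hmap x hx s hs')) (norm_nonneg _)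
              (by norm_num)
            rw [Real.norm_eq_abs, abs_pow]
            apply pow_le_one₀ (abs_nonneg s)
            rw [abs_le]; constructor <;> [linarith [hs'.1]; exact hs'.2]
        _ = M := one_mul M
    · exact intervalIntegrable_const
    · apply ae_of_all
      intro s hs
      rw [uIoc_of_le (by norm_num : (0:ℝ) ≤ 1)] at hs
      have hs' : s ∈ Icc (0:ℝ) 1 := Ioc_subset_Icc_self hs
      refine ContinuousAt.smul (f := fun _ : ℝ => s ^ j) continuousAt_const ?_
      exact ((hDcont (j+1) (by omega)).continuousAt
        (hIopen.mem_nhds (hstI hs' ht₀))).comp (continuous_mul_left s).continuousAt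
  -- derivative of G j is G (j+1)
  have hGder : ∀ j : ℕ, j < k → ∀ t₀ ∈ I, HasDerivAt (G j) (G (j+1) t₀) t₀ := by
    intro j hj t₀ ht₀
    obtain ⟨ε, hε, hball, hmap, hsub⟩ := hloc t₀ ht₀
    obtain ⟨M, hM⟩ := isCompact_Icc.exists_bound_of_continuousOn
      ((hDcont (j+2) (by omega)).mono hsub)
    have key := intervalIntegral.hasDerivAt_integral_of_dominated_loc_of_deriv_le
      (𝕜 := ℝ) (μ := volume) (a := 0) (b := 1) (x₀ := t₀)
      (F := fun x s => s ^ j • iteratedDeriv (j+1) f (s * x))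
      (F' := fun x s => s ^ (j+1) • iteratedDeriv (j+2) f (s * x))
      (bound := fun _ => M) (Metric.ball_mem_nhds t₀ hε)
      ?_ ?_ ?_ ?_ intervalIntegrable_const ?_
    · exact key.2
    · filter_upwards [hIopen.mem_nhds ht₀] with x hx
      exact hmeas j (by omega) x hx
    · exact ((hcontS j (by omega) t₀ ht₀).mono (by
        rw [uIcc_of_le (by norm_num : (0:ℝ) ≤ 1)])).intervalIntegrable
    · exact hmeas (j+1) (by omega) t₀ ht₀
    · apply ae_of_all
      intro s hs x hx
      rw [uIoc_of_le (by norm_num : (0:ℝ) ≤ 1)] at hs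
      have hs' : s ∈ Icc (0:ℝ) 1 := Ioc_subset_Icc_self hs
      have hx' : x ∈ Metric.closedBall t₀ ε := Metric.ball_subset_closedBall hx
      rw [norm_smul]
      calc ‖s ^ (j+1)‖ * ‖iteratedDeriv (j+2) f (s * x)‖
          ≤ 1 * M := by
            apply mul_le_mul _ (hM _ (hmap x hx' s hs')) (norm_nonneg _) (by norm_num)
            rw [Real.norm_eq_abs, abs_pow]
            apply pow_le_one₀ (abs_nonneg s)
            rw [abs_le]; constructor <;> [linarith [hs'.1]; exact hs'.2]
        _ = M := one_mul M
    · apply ae_of_all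
      intro s hs x hx
      rw [uIoc_of_le (by norm_num : (0:ℝ) ≤ 1)] at hs
      have hs' : s ∈ Icc (0:ℝ) 1 := Ioc_subset_Icc_self hs
      have hx' : x ∈ I := hball (Metric.ball_subset_closedBall hx)
      have hin : HasDerivAt (iteratedDeriv (j+1) f) (iteratedDeriv (j+2) f (s * x)) (s * x) :=
        hDderiv (j+1) (by omega) (s * x) (hstI hs' hx')
      have hlin : HasDerivAt (fun y : ℝ => s * y) s x := by
        simpa using (hasDerivAt_id x).const_mul s
      have hcomp := HasDerivAt.scomp x hin hlin
      have := hcomp.const_smul (s ^ j)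
      have heq : s ^ j • s • iteratedDeriv (j+2) f (s * x) =
          s ^ (j+1) • iteratedDeriv (j+2) f (s * x) := by
        rw [smul_smul, ← pow_succ]
      rw [heq] at this
      exact this
  -- smoothness of G j
  have hGsmooth : ∀ d j : ℕ, j + d ≤ k → ContDiffOn ℝ d (G j) I := by
    intro d
    induction d with
    | zero =>
      intro j hj
      rw [Nat.cast_zero, contDiffOn_zero]
      exact hGcont j (by omega)
    | succ d ih =>
      intro j hj
      have hcast : ((d + 1 : ℕ) : WithTop ℕ∞) = (d : WithTop ℕ∞) + 1 := by push_cast; rfl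
      rw [hcast, contDiffOn_succ_iff_deriv_of_isOpen hIopen]
      refine ⟨fun x hx => ((hGder j (by omega) x hx).differentiableAt).differentiableWithinAt,
        ?_, ?_⟩
      · intro h
        exfalso
        exact (by simp : ((d : WithTop ℕ∞) ≠ ⊤)) h
      · exact (ih (j+1) (by omega)).congr fun x hx => (hGder j (by omega) x hx).deriv
  -- the identity f t = t * G 0 t
  have hid : ∀ t ∈ I, f t = (t : ℂ) * G 0 t := by
    intro t ht
    rcases eq_or_ne t 0 with rfl | ht0
    · simp [hf0]
    · have hsub : uIcc (0:ℝ) t ⊆ I := Set.ordConnected_Ioo.uIcc_subset h0I ht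
      have hG0 : G 0 t = ∫ s in (0:ℝ)..1, deriv f (s * t) := by
        rw [hG]
        simp [iteratedDeriv_one]
      have hcv : (∫ s in (0:ℝ)..1, deriv f (s * t)) = t⁻¹ • ∫ u in (0:ℝ)..t, deriv f u := by
        have := intervalIntegral.integral_comp_mul_right (a := 0) (b := 1)
          (fun u => deriv f u) ht0
        simpa using this
      have hdiffAt : ∀ x ∈ uIcc (0:ℝ) t, DifferentiableAt ℝ f x := by
        intro x hx
        have : DifferentiableOn ℝ f I := hf.differentiableOn (by
          simp)
        exact this.differentiableAt (hIopen.mem_nhds (hsub hx))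
      have hint : IntervalIntegrable (deriv f) volume 0 t := by
        apply ContinuousOn.intervalIntegrable
        have : ContinuousOn (deriv f) I := by
          have := hDcont 1 (by omega)
          rwa [iteratedDeriv_one] at this
        exact this.mono hsub
      have hftc : (∫ u in (0:ℝ)..t, deriv f u) = f t - f 0 :=
        intervalIntegral.integral_deriv_eq_sub hdiffAt hint
      rw [hG0, hcv, hftc, hf0, sub_zero, Complex.real_smul]
      push_cast
      rw [← mul_assoc]
      rw [mul_inv_cancel₀ (by exact_mod_cast ht0), one_mul]
  exact ⟨G 0, by simpa using hGsmooth k 0 (by omega), hid⟩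


lemma hadamard_iter {a : ℝ} (ha : 0 < a) :
    ∀ (m k : ℕ) (f g₀ : ℝ → ℂ), ContDiffOn ℝ (↑(k + m)) f (Ioo (-a) a) →
      ContinuousAt g₀ 0 → (∀ᶠ t in 𝓝[≠] (0:ℝ), f t = (t:ℂ)^m * g₀ t) →
      ∃ g : ℝ → ℂ, ContDiffOn ℝ k g (Ioo (-a) a) ∧
        ∀ t ∈ Ioo (-a) a, f t = (t:ℂ)^m * g t := by
  intro m
  induction m with
  | zero =>
    intro k f g₀ hf _ _
    exact ⟨f, by simpa using hf, fun t ht => by simp⟩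
  | succ m ih =>
    intro k f g₀ hf hg₀ hev
    have h0I : (0:ℝ) ∈ Ioo (-a) a := ⟨by linarith, ha⟩
    have hfc : ContinuousAt f 0 :=
      hf.continuousOn.continuousAt (isOpen_Ioo.mem_nhds h0I)
    have h1 : Tendsto f (𝓝[≠] (0:ℝ)) (𝓝 (f 0)) :=
      hfc.tendsto.mono_left nhdsWithin_le_nhds
    have h2 : Tendsto (fun t : ℝ => (t:ℂ)^(m+1) * g₀ t) (𝓝[≠] (0:ℝ)) (𝓝 0) := by
      have hc : ContinuousAt (fun t : ℝ => (t:ℂ)^(m+1) * g₀ t) 0 :=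
        ((Complex.continuous_ofReal.pow (m+1)).continuousAt).mul hg₀
      have := hc.tendsto.mono_left (nhdsWithin_le_nhds (s := {(0:ℝ)}ᶜ))
      simpa using this
    have hf0 : f 0 = 0 := by
      have h1' : Tendsto (fun t : ℝ => (t:ℂ)^(m+1) * g₀ t) (𝓝[≠] (0:ℝ)) (𝓝 (f 0)) :=
        h1.congr' hev
      exact tendsto_nhds_unique h1' h2
    have hf' : ContDiffOn ℝ ((k + m : ℕ) + 1) f (Ioo (-a) a) := by
      have hcast : ((k + (m+1) : ℕ) : WithTop ℕ∞) = ((k + m : ℕ) : WithTop ℕ∞) + 1 := by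
        push_cast; ring
      rwa [hcast] at hf
    obtain ⟨f₁, hf₁, hid⟩ := hadamard_step ha (k + m) f hf' hf0
    have hIoo : Ioo (-a) a ∈ 𝓝[≠] (0:ℝ) :=
      nhdsWithin_le_nhds (isOpen_Ioo.mem_nhds h0I)
    have hev' : ∀ᶠ t in 𝓝[≠] (0:ℝ), f₁ t = (t:ℂ)^m * g₀ t := by
      filter_upwards [hev, hIoo, self_mem_nhdsWithin] with t h1t h2t h3t
      have ht0 : (t : ℂ) ≠ 0 := by
        exact_mod_cast Complex.ofReal_ne_zero.mpr h3t
      have := hid t h2t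
      rw [h1t] at this
      have : (t:ℂ) * ((t:ℂ)^m * g₀ t) = (t:ℂ) * f₁ t := by
        rw [← this, pow_succ]; ring
      exact (mul_left_cancel₀ ht0 this).symm
    obtain ⟨g, hg, hgid⟩ := ih k f₁ g₀ hf₁ hg₀ hev'
    refine ⟨g, hg, fun t ht => ?_⟩
    rw [hid t ht, hgid t ht, pow_succ]; ring

/-- If `f` is `C^n` near `0` and its multiplicity (order of flatness) at `0` is `m < n`
(i.e. `m` is the largest integer `p` with `f(t) = t^p g(t)` near `0` for continuous `g`),
then `f(t) = t^m g(t)` near `0` for a `C^{n-m}` function `g` with `g(0) ≠ 0`. -/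
theorem stmt7 (n m : ℕ) (f : ℝ → ℂ)
    (hf : ContDiffAt ℝ n f 0)
    (hmul : ∃ g : ℝ → ℂ, Continuous g ∧ ∀ᶠ t in 𝓝 (0 : ℝ), f t = t ^ m * g t)
    (hmax : ¬ ∃ g : ℝ → ℂ, Continuous g ∧ ∀ᶠ t in 𝓝 (0 : ℝ), f t = t ^ (m + 1) * g t)
    (hmn : m < n) :
    ∃ (g : ℝ → ℂ) (U : Set ℝ), U ∈ 𝓝 (0 : ℝ) ∧ ContDiffOn ℝ (n - m) g U ∧ g 0 ≠ 0 ∧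
      ∀ t ∈ U, f t = t ^ m * g t := by
  obtain ⟨g₀, hg₀c, hg₀⟩ := hmul
  obtain ⟨u, hu, hfu⟩ := hf.contDiffOn le_rfl (by simp)
  obtain ⟨ε, hε, hball⟩ := Metric.mem_nhds_iff.mp hu
  have hIsub : Ioo (-ε) ε ⊆ u := by
    have := Real.ball_eq_Ioo 0 ε
    rw [zero_sub, zero_add] at this
    rw [← this]; exact hball
  have hfI : ContDiffOn ℝ (↑((n - m) + m)) f (Ioo (-ε) ε) := by
    have hcast : ((n : ℕ) : WithTop ℕ∞) = ((n - m + m : ℕ) : WithTop ℕ∞) := by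
      congr 1; omega
    exact hcast ▸ (hfu.mono hIsub)
  obtain ⟨g, hg, hgid⟩ := hadamard_iter hε m (n - m) f g₀ hfI hg₀c.continuousAt
    (hg₀.filter_mono nhdsWithin_le_nhds)
  refine ⟨g, Ioo (-ε) ε, Ioo_mem_nhds (by linarith) hε, hg, ?_, hgid⟩
  intro hg0
  have hnm : n - m = (n - m - 1) + 1 := by omega
  have hg' : ContDiffOn ℝ ((n - m - 1 : ℕ) + 1) g (Ioo (-ε) ε) := by
    have hcast : ((n - m : ℕ) : WithTop ℕ∞) = ((n - m - 1 : ℕ) : WithTop ℕ∞) + 1 := by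
      rw [hnm]; push_cast; ring
    exact hcast ▸ hg
  obtain ⟨h, hh, hhid⟩ := hadamard_step hε (n - m - 1) g hg' hg0
  set clamp : ℝ → ℝ := fun t => max (-(ε/2)) (min (ε/2) t) with hclamp
  have hclamp_cont : Continuous clamp := by
    apply continuous_const.max (continuous_const.min continuous_id)
  have hclamp_mem : ∀ x, clamp x ∈ Ioo (-ε) ε := by
    intro x
    constructor
    · have : -(ε/2) ≤ clamp x := le_max_left _ _
      linarith
    · have h1 : clamp x ≤ ε/2 := by
        apply max_le (by linarith)
        exact min_le_left _ _
      linarith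
  apply hmax
  refine ⟨h ∘ clamp, hh.continuousOn.comp_continuous hclamp_cont hclamp_mem, ?_⟩
  filter_upwards [Ioo_mem_nhds (by linarith : -(ε/2) < (0:ℝ)) (by linarith : (0:ℝ) < ε/2)]
    with t ht
  have htI : t ∈ Ioo (-ε) ε := ⟨by linarith [ht.1], by linarith [ht.2]⟩
  have hct : clamp t = t := by
    rw [hclamp]
    simp only
    rw [min_eq_right (le_of_lt ht.2), max_eq_right (le_of_lt ht.1)]
  have : f t = (t:ℂ)^m * g t := hgid t htI
  rw [this, hhid t htI]
  simp only [Function.comp, hct]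
  rw [pow_succ]; ring
end

section
/- Let P_0 = z^n + Σ_{j=1}^n (-1)^j a_j z^{n-j} be a monic complex polynomial with P_0 = P_1 · P_2 where P_1 and P_2 are monic polynomials without a common root. Then there exist real analytic mappings P ↦ P_1(P), P ↦ P_2(P), defined for monic polynomials P of degree n near P_0 (in coefficient space ℂ^n), taking values in monic polynomials of degrees deg P_1 and deg P_2, such that P = P_1(P)·P_2(P) and P_1(P_0) = P_1, P_2(P_0) = P_2. -/
open Finset Filter Topology

/-- Evaluation of the monic polynomial `z^m + ∑_{j=1}^m (-1)^j c_j z^{m-j}` with coefficient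
vector `c ∈ ℂ^m` at `z`. -/
noncomputable def monicEval (m : ℕ) (c : Fin m → ℂ) (z : ℂ) : ℂ :=
  z ^ m + ∑ j : Fin m, (-1 : ℂ) ^ (j.1 + 1) * c j * z ^ (m - 1 - j.1)

namespace Stmt11Aux

open Polynomial

/-- The linear part of the coefficient-to-polynomial map. -/
noncomputable def linPoly (m : ℕ) : (Fin m → ℂ) →ₗ[ℂ] ℂ[X] :=
  ∑ j : Fin m, LinearMap.smulRight (LinearMap.proj j)
    (((-1 : ℂ) ^ (j.1 + 1)) • (X : ℂ[X]) ^ (m - 1 - j.1))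

lemma linPoly_apply (m : ℕ) (c : Fin m → ℂ) :
    linPoly m c = ∑ j : Fin m, C ((-1 : ℂ) ^ (j.1 + 1) * c j) * X ^ (m - 1 - j.1) := by
  simp only [linPoly, LinearMap.sum_apply, LinearMap.smulRight_apply, LinearMap.proj_apply,
    smul_smul, Polynomial.smul_eq_C_mul]
  refine Finset.sum_congr rfl fun j _ => ?_
  rw [← mul_assoc, ← C_mul, mul_comm (c j)]

lemma degree_linPoly_lt (m : ℕ) (c : Fin m → ℂ) :
    (linPoly m c).degree < (m : WithBot ℕ) := by
  rw [linPoly_apply]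
  refine lt_of_le_of_lt (degree_sum_le _ _) ?_
  rw [Finset.sup_lt_iff (by exact WithBot.bot_lt_coe m)]
  intro j _
  refine lt_of_le_of_lt (degree_C_mul_X_pow_le _ _) ?_
  exact_mod_cast (by omega : m - 1 - j.1 < m)

/-- The monic polynomial with coefficient vector `c`. -/
noncomputable def toPoly (m : ℕ) (c : Fin m → ℂ) : ℂ[X] :=
  X ^ m + linPoly m c

lemma monic_toPoly (m : ℕ) (c : Fin m → ℂ) : (toPoly m c).Monic :=
  monic_X_pow_add (by exact_mod_cast degree_linPoly_lt m c)

lemma degree_toPoly (m : ℕ) (c : Fin m → ℂ) : (toPoly m c).degree = m := by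
  rw [toPoly, degree_add_eq_left_of_degree_lt, degree_X_pow]
  rw [degree_X_pow]; exact degree_linPoly_lt m c

lemma eval_toPoly (m : ℕ) (c : Fin m → ℂ) (z : ℂ) :
    (toPoly m c).eval z = monicEval m c z := by
  rw [toPoly, linPoly_apply, monicEval]
  simp [eval_finset_sum, mul_assoc]

/-- Reading off the coefficient vector of a polynomial. -/
noncomputable def fromPolyL (m : ℕ) : ℂ[X] →ₗ[ℂ] (Fin m → ℂ) :=
  LinearMap.pi fun j => ((-1 : ℂ) ^ (j.1 + 1)) • Polynomial.lcoeff ℂ (m - 1 - j.1)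

lemma fromPolyL_apply (m : ℕ) (p : ℂ[X]) (j : Fin m) :
    fromPolyL m p j = (-1 : ℂ) ^ (j.1 + 1) * p.coeff (m - 1 - j.1) := by
  simp [fromPolyL, LinearMap.pi_apply, lcoeff_apply]

lemma neg_one_sq_pow (k : ℕ) : ((-1 : ℂ) ^ (k + 1)) * ((-1 : ℂ) ^ (k + 1)) = 1 := by
  rw [← pow_add]
  exact Even.neg_one_pow ⟨k + 1, rfl⟩

lemma coeff_linPoly (m : ℕ) (c : Fin m → ℂ) (j : Fin m) :
    (linPoly m c).coeff (m - 1 - j.1) = (-1 : ℂ) ^ (j.1 + 1) * c j := by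
  rw [linPoly_apply, finset_sum_coeff]
  rw [Finset.sum_eq_single j]
  · simp only [coeff_C_mul, coeff_X_pow, if_pos rfl, if_true, mul_one]
  · intro i _ hij
    have h1 : i.1 < m := i.2
    have h2 : j.1 < m := j.2
    have : ¬ (m - 1 - j.1 = m - 1 - i.1) := by
      intro h; apply hij; exact Fin.ext (by omega)
    simp only [coeff_C_mul, coeff_X_pow, if_neg this, mul_zero]
  · simp

lemma coeff_toPoly (m : ℕ) (c : Fin m → ℂ) (j : Fin m) :
    (toPoly m c).coeff (m - 1 - j.1) = (-1 : ℂ) ^ (j.1 + 1) * c j := by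
  have h2 : j.1 < m := j.2
  rw [toPoly, coeff_add, coeff_X_pow, if_neg (by omega), zero_add, coeff_linPoly]

lemma fromPolyL_toPoly (m : ℕ) (c : Fin m → ℂ) : fromPolyL m (toPoly m c) = c := by
  funext j
  rw [fromPolyL_apply, coeff_toPoly, ← mul_assoc, neg_one_sq_pow, one_mul]

lemma eq_zero_of_fromPolyL (m : ℕ) (p : ℂ[X]) (hdeg : p.degree < (m : WithBot ℕ))
    (h : fromPolyL m p = 0) : p = 0 := by
  ext k
  simp only [coeff_zero]
  by_cases hk : k < m
  · set j : Fin m := ⟨m - 1 - k, by omega⟩ with hj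
    have hjk : m - 1 - j.1 = k := by simp only [hj]; omega
    have := congrFun h j
    rw [fromPolyL_apply, hjk] at this
    simp only [Pi.zero_apply, mul_eq_zero] at this
    rcases this with h1 | h1
    · exact absurd h1 (pow_ne_zero _ (by norm_num))
    · exact h1
  · exact coeff_eq_zero_of_degree_lt (lt_of_lt_of_le hdeg (by exact_mod_cast Nat.le_of_not_lt hk))

lemma toPoly_fromPolyL (m : ℕ) (p : ℂ[X]) (hm : p.Monic) (hd : p.degree = m) :
    toPoly m (fromPolyL m p) = p := by
  have hnd : p.natDegree = m := natDegree_eq_of_degree_eq_some hd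
  ext k
  rcases lt_trichotomy k m with hk | hk | hk
  · set j : Fin m := ⟨m - 1 - k, by omega⟩ with hj
    have hjk : m - 1 - j.1 = k := by simp only [hj]; omega
    have := coeff_toPoly m (fromPolyL m p) j
    rw [hjk, fromPolyL_apply, hjk, ← mul_assoc, neg_one_sq_pow, one_mul] at this
    exact this
  · subst hk
    rw [toPoly, coeff_add, coeff_X_pow, if_pos rfl,
      coeff_eq_zero_of_degree_lt (degree_linPoly_lt k _), add_zero]
    have := hm.coeff_natDegree
    rw [hnd] at this
    exact this.symm
  · have h1 : (toPoly m (fromPolyL m p)).coeff k = 0 :=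
      coeff_eq_zero_of_degree_lt (by rw [degree_toPoly]; exact_mod_cast hk)
    have h2 : p.coeff k = 0 :=
      coeff_eq_zero_of_degree_lt (by rw [hd]; exact_mod_cast hk)
    rw [h1, h2]

lemma withbot_add_lt {x : WithBot ℕ} {k l : ℕ} (h : x < (k : WithBot ℕ)) :
    x + (l : WithBot ℕ) < ((k + l : ℕ) : WithBot ℕ) := by
  induction x with
  | bot =>
    rw [WithBot.bot_add]
    exact WithBot.bot_lt_coe (k + l)
  | coe n =>
    have hn : n < k := by
      simpa [Nat.cast_withBot, WithBot.coe_lt_coe] using h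
    have : n + l < k + l := Nat.add_lt_add_right hn l
    simpa [Nat.cast_withBot, ← WithBot.coe_add, WithBot.coe_lt_coe] using this

end Stmt11Aux

set_option maxHeartbeats 1000000 in
/-- Splitting lemma: if the monic polynomial `P₀` (coefficients `a`) factors as `P₁ · P₂`
with `P₁, P₂` monic without common root, then for `P` in a neighborhood of `P₀` in
coefficient space there are analytic maps `P ↦ P₁(P)`, `P ↦ P₂(P)` with `P = P₁(P)·P₂(P)`
and the given initial values. -/
theorem stmt11 (n1 n2 : ℕ) (b : Fin n1 → ℂ) (d : Fin n2 → ℂ) (a : Fin (n1 + n2) → ℂ)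
    (hsplit : ∀ z : ℂ, monicEval (n1 + n2) a z = monicEval n1 b z * monicEval n2 d z)
    (hnocommon : ∀ z : ℂ, ¬ (monicEval n1 b z = 0 ∧ monicEval n2 d z = 0)) :
    ∃ U ∈ 𝓝 a, IsOpen U ∧
      ∃ (F : (Fin (n1 + n2) → ℂ) → Fin n1 → ℂ) (G : (Fin (n1 + n2) → ℂ) → Fin n2 → ℂ),
        AnalyticOn ℂ F U ∧ AnalyticOn ℂ G U ∧
        (∀ c ∈ U, ∀ z : ℂ,
          monicEval (n1 + n2) c z = monicEval n1 (F c) z * monicEval n2 (G c) z) ∧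
        F a = b ∧ G a = d := by
  classical
  set P1 := Stmt11Aux.toPoly n1 b with hP1def
  set P2 := Stmt11Aux.toPoly n2 d with hP2def
  have hP1m : P1.Monic := Stmt11Aux.monic_toPoly n1 b
  have hP2m : P2.Monic := Stmt11Aux.monic_toPoly n2 d
  have hP1d : P1.degree = (n1 : WithBot ℕ) := Stmt11Aux.degree_toPoly n1 b
  have hP2d : P2.degree = (n2 : WithBot ℕ) := Stmt11Aux.degree_toPoly n2 d
  have ha : Stmt11Aux.toPoly (n1 + n2) a = P1 * P2 := by
    apply Polynomial.funext; intro z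
    rw [Stmt11Aux.eval_toPoly, Polynomial.eval_mul, hP1def, hP2def,
      Stmt11Aux.eval_toPoly, Stmt11Aux.eval_toPoly]
    exact hsplit z
  have haC : Stmt11Aux.fromPolyL (n1 + n2) (P1 * P2) = a := by
    rw [← ha, Stmt11Aux.fromPolyL_toPoly]
  have hco : IsCoprime P1 P2 := by
    refine (Polynomial.isCoprime_iff_aeval_ne_zero_of_isAlgClosed ℂ ℂ P1 P2).mpr fun z => ?_
    have h := hnocommon z
    rw [← Stmt11Aux.eval_toPoly, ← Stmt11Aux.eval_toPoly, ← hP1def, ← hP2def] at h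
    simp only [Polynomial.coe_aeval_eq_eval]
    tauto
  -- the multiplication map in coefficient space
  let Φ : ((Fin n1 → ℂ) × (Fin n2 → ℂ)) → (Fin (n1 + n2) → ℂ) :=
    fun x => Stmt11Aux.fromPolyL (n1 + n2) (Stmt11Aux.toPoly n1 x.1 * Stmt11Aux.toPoly n2 x.2)
  have hΦeval : ∀ (x : (Fin n1 → ℂ) × (Fin n2 → ℂ)) (z : ℂ),
      monicEval (n1 + n2) (Φ x) z = monicEval n1 x.1 z * monicEval n2 x.2 z := by
    intro x z
    rw [← Stmt11Aux.eval_toPoly, ← Stmt11Aux.eval_toPoly, ← Stmt11Aux.eval_toPoly]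
    show Polynomial.eval z (Stmt11Aux.toPoly (n1 + n2) (Stmt11Aux.fromPolyL (n1 + n2) _)) = _
    rw [Stmt11Aux.toPoly_fromPolyL (n1 + n2) _
      ((Stmt11Aux.monic_toPoly n1 x.1).mul (Stmt11Aux.monic_toPoly n2 x.2))
      (by rw [Polynomial.degree_mul, Stmt11Aux.degree_toPoly, Stmt11Aux.degree_toPoly,
        Nat.cast_add]), Polynomial.eval_mul]
  have hΦa : Φ (b, d) = a := haC
  -- the linearization of Φ at (b, d)
  let T : ((Fin n1 → ℂ) × (Fin n2 → ℂ)) →ₗ[ℂ] (Fin (n1 + n2) → ℂ) :=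
    { toFun := fun x => Stmt11Aux.fromPolyL (n1 + n2)
        (Stmt11Aux.linPoly n1 x.1 * P2 + P1 * Stmt11Aux.linPoly n2 x.2)
      map_add' := by
        intro x y
        show Stmt11Aux.fromPolyL (n1 + n2)
            (Stmt11Aux.linPoly n1 (x.1 + y.1) * P2 + P1 * Stmt11Aux.linPoly n2 (x.2 + y.2)) = _ + _
        have hr : ∀ A A' B B' : Polynomial ℂ,
            (A + A') * P2 + P1 * (B + B') = (A * P2 + P1 * B) + (A' * P2 + P1 * B') :=
          fun _ _ _ _ => by ring
        rw [map_add (Stmt11Aux.linPoly n1) x.1 y.1, map_add (Stmt11Aux.linPoly n2) x.2 y.2, hr,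
          map_add]
      map_smul' := by
        intro s x
        show Stmt11Aux.fromPolyL (n1 + n2)
            (Stmt11Aux.linPoly n1 (s • x.1) * P2 + P1 * Stmt11Aux.linPoly n2 (s • x.2))
          = s • Stmt11Aux.fromPolyL (n1 + n2)
            (Stmt11Aux.linPoly n1 x.1 * P2 + P1 * Stmt11Aux.linPoly n2 x.2)
        rw [map_smul, map_smul, smul_mul_assoc, mul_smul_comm, ← smul_add, map_smul] }
  let T' : ((Fin n1 → ℂ) × (Fin n2 → ℂ)) →L[ℂ] (Fin (n1 + n2) → ℂ) :=
    LinearMap.toContinuousLinearMap T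
  -- the bilinear error term
  let Bl : (Fin n1 → ℂ) →ₗ[ℂ] (Fin n2 → ℂ) →L[ℂ] (Fin (n1 + n2) → ℂ) :=
    { toFun := fun u => LinearMap.toContinuousLinearMap
        { toFun := fun v => Stmt11Aux.fromPolyL (n1 + n2)
            (Stmt11Aux.linPoly n1 u * Stmt11Aux.linPoly n2 v)
          map_add' := by
            intro v w
            show Stmt11Aux.fromPolyL (n1 + n2)
              (Stmt11Aux.linPoly n1 u * Stmt11Aux.linPoly n2 (v + w)) = _ + _
            rw [map_add, mul_add, map_add]
          map_smul' := by
            intro s v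
            show Stmt11Aux.fromPolyL (n1 + n2)
                (Stmt11Aux.linPoly n1 u * Stmt11Aux.linPoly n2 (s • v))
              = s • Stmt11Aux.fromPolyL (n1 + n2)
                (Stmt11Aux.linPoly n1 u * Stmt11Aux.linPoly n2 v)
            rw [map_smul, mul_smul_comm, map_smul] }
      map_add' := by
        intro u u'
        refine ContinuousLinearMap.ext fun v => ?_
        show Stmt11Aux.fromPolyL (n1 + n2)
          (Stmt11Aux.linPoly n1 (u + u') * Stmt11Aux.linPoly n2 v) = _ + _
        rw [map_add, add_mul, map_add]
        rfl
      map_smul' := by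
        intro s u
        refine ContinuousLinearMap.ext fun v => ?_
        show Stmt11Aux.fromPolyL (n1 + n2)
            (Stmt11Aux.linPoly n1 (s • u) * Stmt11Aux.linPoly n2 v)
          = s • Stmt11Aux.fromPolyL (n1 + n2)
            (Stmt11Aux.linPoly n1 u * Stmt11Aux.linPoly n2 v)
        rw [map_smul, smul_mul_assoc, map_smul] }
  let Bc : (Fin n1 → ℂ) →L[ℂ] (Fin n2 → ℂ) →L[ℂ] (Fin (n1 + n2) → ℂ) :=
    LinearMap.toContinuousLinearMap Bl
  -- decomposition of Φ
  have hΦdecomp : Φ = fun x : (Fin n1 → ℂ) × (Fin n2 → ℂ) =>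
      a + T' (x - (b, d)) + Bc (x.1 - b) (x.2 - d) := by
    funext x
    show Stmt11Aux.fromPolyL (n1 + n2) (Stmt11Aux.toPoly n1 x.1 * Stmt11Aux.toPoly n2 x.2) = _
    have h1 : Stmt11Aux.toPoly n1 x.1 = P1 + Stmt11Aux.linPoly n1 (x.1 - b) := by
      rw [hP1def]
      unfold Stmt11Aux.toPoly
      rw [map_sub]
      ring
    have h2 : Stmt11Aux.toPoly n2 x.2 = P2 + Stmt11Aux.linPoly n2 (x.2 - d) := by
      rw [hP2def]
      unfold Stmt11Aux.toPoly
      rw [map_sub]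
      ring
    rw [h1, h2]
    have hexp : (P1 + Stmt11Aux.linPoly n1 (x.1 - b)) * (P2 + Stmt11Aux.linPoly n2 (x.2 - d)) =
        P1 * P2 + (Stmt11Aux.linPoly n1 (x.1 - b) * P2 + P1 * Stmt11Aux.linPoly n2 (x.2 - d))
          + Stmt11Aux.linPoly n1 (x.1 - b) * Stmt11Aux.linPoly n2 (x.2 - d) := by ring
    rw [hexp, map_add, map_add, haC]
    rfl
  -- analyticity of Φ
  have hΦan : ∀ x : (Fin n1 → ℂ) × (Fin n2 → ℂ), AnalyticAt ℂ Φ x := by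
    intro x
    rw [hΦdecomp]
    refine AnalyticAt.add (AnalyticAt.add analyticAt_const ?_) ?_
    · exact (T'.analyticAt _).comp (analyticAt_id.sub analyticAt_const)
    · have h1 : AnalyticAt ℂ (fun y : (Fin n1 → ℂ) × (Fin n2 → ℂ) => Bc y.1 y.2)
          (x.1 - b, x.2 - d) := Bc.analyticAt_bilinear _
      have h2 : AnalyticAt ℂ
          (fun x : (Fin n1 → ℂ) × (Fin n2 → ℂ) => ((x.1 - b, x.2 - d) :
            (Fin n1 → ℂ) × (Fin n2 → ℂ))) x :=
        (analyticAt_fst.sub analyticAt_const).prod (analyticAt_snd.sub analyticAt_const)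
      exact AnalyticAt.comp
        (f := fun x : (Fin n1 → ℂ) × (Fin n2 → ℂ) => ((x.1 - b, x.2 - d) :
          (Fin n1 → ℂ) × (Fin n2 → ℂ))) h1 h2
  -- derivative of Φ
  have hΦd : HasFDerivAt Φ T' (b, d) := by
    rw [hΦdecomp]
    have hTd : HasFDerivAt
        (fun x : (Fin n1 → ℂ) × (Fin n2 → ℂ) => T' (x - (b, d))) T' (b, d) := by
      have h : (fun x : (Fin n1 → ℂ) × (Fin n2 → ℂ) => T' (x - (b, d)))
          = fun x => T' x - T' (b, d) := by
        funext x; rw [map_sub]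
      rw [h]
      exact (T'.hasFDerivAt).sub_const _
    have hBd : HasFDerivAt
        (fun x : (Fin n1 → ℂ) × (Fin n2 → ℂ) => Bc (x.1 - b) (x.2 - d))
        ((Bc.isBoundedBilinearMap.deriv
            ((((b, d) : (Fin n1 → ℂ) × (Fin n2 → ℂ))) - (b, d))).comp
          (ContinuousLinearMap.id ℂ _)) (b, d) := by
      have hsub : HasFDerivAt
          (fun x : (Fin n1 → ℂ) × (Fin n2 → ℂ) => x - (b, d))
          (ContinuousLinearMap.id ℂ ((Fin n1 → ℂ) × (Fin n2 → ℂ)))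
          (((b, d) : (Fin n1 → ℂ) × (Fin n2 → ℂ))) := by
        simpa using (hasFDerivAt_id (((b, d) : (Fin n1 → ℂ) × (Fin n2 → ℂ)))).sub_const
          (((b, d) : (Fin n1 → ℂ) × (Fin n2 → ℂ)))
      exact HasFDerivAt.comp
        (f := fun x : (Fin n1 → ℂ) × (Fin n2 → ℂ) => x - (b, d))
        (((b, d) : (Fin n1 → ℂ) × (Fin n2 → ℂ)))
        (Bc.isBoundedBilinearMap.hasFDerivAt
          ((((b, d) : (Fin n1 → ℂ) × (Fin n2 → ℂ))) - (b, d))) hsub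
    have hsum := ((hasFDerivAt_const a
      (((b, d) : (Fin n1 → ℂ) × (Fin n2 → ℂ)))).add hTd).add hBd
    refine hsum.congr_fderiv ?_
    refine ContinuousLinearMap.ext fun x => ?_
    simp [IsBoundedBilinearMap.deriv_apply, sub_self]
  -- T is bijective
  have hTinj : Function.Injective T := by
    rw [← LinearMap.ker_eq_bot, LinearMap.ker_eq_bot']
    intro x hx
    have hq : Stmt11Aux.linPoly n1 x.1 * P2 + P1 * Stmt11Aux.linPoly n2 x.2 = 0 := by
      refine Stmt11Aux.eq_zero_of_fromPolyL (n1 + n2) _ ?_ hx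
      refine lt_of_le_of_lt (Polynomial.degree_add_le _ _) (max_lt ?_ ?_)
      · refine lt_of_le_of_lt (Polynomial.degree_mul_le _ _) ?_
        rw [hP2d]
        exact Stmt11Aux.withbot_add_lt (Stmt11Aux.degree_linPoly_lt n1 x.1)
      · refine lt_of_le_of_lt (Polynomial.degree_mul_le _ _) ?_
        rw [hP1d, add_comm]
        have h := Stmt11Aux.withbot_add_lt (k := n2) (l := n1)
          (Stmt11Aux.degree_linPoly_lt n2 x.2)
        rwa [Nat.add_comm n2 n1] at h
    have hdvd : P1 ∣ Stmt11Aux.linPoly n1 x.1 * P2 :=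
      ⟨-(Stmt11Aux.linPoly n2 x.2), by linear_combination hq⟩
    have hA : Stmt11Aux.linPoly n1 x.1 = 0 :=
      Polynomial.eq_zero_of_dvd_of_degree_lt (hco.dvd_of_dvd_mul_right hdvd)
        (by rw [hP1d]; exact Stmt11Aux.degree_linPoly_lt n1 x.1)
    have hB : Stmt11Aux.linPoly n2 x.2 = 0 := by
      have h0 : P1 * Stmt11Aux.linPoly n2 x.2 = 0 := by
        rw [hA] at hq; simpa using hq
      rcases mul_eq_zero.mp h0 with h | h
      · exact absurd h hP1m.ne_zero
      · exact h
    have hx1 : x.1 = 0 := by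
      funext j
      have h := (Stmt11Aux.coeff_linPoly n1 x.1 j).symm
      rw [hA, Polynomial.coeff_zero] at h
      rcases mul_eq_zero.mp h with h' | h'
      · exact absurd h' (pow_ne_zero _ (by norm_num))
      · exact h'
    have hx2 : x.2 = 0 := by
      funext j
      have h := (Stmt11Aux.coeff_linPoly n2 x.2 j).symm
      rw [hB, Polynomial.coeff_zero] at h
      rcases mul_eq_zero.mp h with h' | h'
      · exact absurd h' (pow_ne_zero _ (by norm_num))
      · exact h'
    exact Prod.ext hx1 hx2
  have hfr : Module.finrank ℂ ((Fin n1 → ℂ) × (Fin n2 → ℂ))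
      = Module.finrank ℂ (Fin (n1 + n2) → ℂ) := by
    simp [Module.finrank_prod, Module.finrank_fintype_fun_eq_card]
  have hTbij : Function.Bijective T :=
    ⟨hTinj, (LinearMap.injective_iff_surjective_of_finrank_eq_finrank hfr).mp hTinj⟩
  let TE : ((Fin n1 → ℂ) × (Fin n2 → ℂ)) ≃L[ℂ] (Fin (n1 + n2) → ℂ) :=
    (LinearEquiv.ofBijective T hTbij).toContinuousLinearEquiv
  have hTE : (TE : ((Fin n1 → ℂ) × (Fin n2 → ℂ)) →L[ℂ] (Fin (n1 + n2) → ℂ)) = T' := by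
    refine ContinuousLinearMap.ext fun x => ?_
    rfl
  have hstrict : HasStrictFDerivAt Φ
      (TE : ((Fin n1 → ℂ) × (Fin n2 → ℂ)) →L[ℂ] (Fin (n1 + n2) → ℂ)) (b, d) := by
    have h := (hΦan (b, d)).hasStrictFDerivAt
    rwa [hΦd.fderiv, ← hTE] at h
  -- the local inverse
  let f := hstrict.toOpenPartialHomeomorph Φ
  have hfcoe : ⇑f = Φ := hstrict.toOpenPartialHomeomorph_coe
  have hsrc : ((b, d) : (Fin n1 → ℂ) × (Fin n2 → ℂ)) ∈ f.source :=
    hstrict.mem_toOpenPartialHomeomorph_source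
  have hfbd : f (b, d) = a := by rw [show f (b, d) = Φ (b, d) from congrFun hfcoe _, hΦa]
  have hta : a ∈ f.target := hfbd ▸ f.map_source hsrc
  have hsymm_an : AnalyticAt ℂ f.symm a := by
    have h := f.analyticAt_symm' hsrc (by rw [hfcoe]; exact hΦan (b, d))
      (by rw [hfcoe, hΦd.fderiv, ← hTE])
    rwa [hfbd] at h
  obtain ⟨V, hV1, hV2, hV3⟩ := eventually_nhds_iff.mp hsymm_an.eventually_analyticAt
  refine ⟨f.target ∩ V, Filter.inter_mem (f.open_target.mem_nhds hta) (hV2.mem_nhds hV3),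
    f.open_target.inter hV2, fun c => (f.symm c).1, fun c => (f.symm c).2, ?_, ?_, ?_, ?_, ?_⟩
  · intro c hc
    exact (analyticAt_fst.comp (hV1 c hc.2)).analyticWithinAt
  · intro c hc
    exact (analyticAt_snd.comp (hV1 c hc.2)).analyticWithinAt
  · intro c hc z
    have hc' : Φ (f.symm c) = c := by rw [← congrFun hfcoe]; exact f.right_inv hc.1
    calc monicEval (n1 + n2) c z = monicEval (n1 + n2) (Φ (f.symm c)) z := by rw [hc']
    _ = _ := hΦeval _ z
  · have h : f.symm a = (b, d) := by rw [← hfbd]; exact f.left_inv hsrc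
    show (f.symm a).1 = b
    rw [h]
  · have h : f.symm a = (b, d) := by rw [← hfbd]; exact f.left_inv hsrc
    show (f.symm a).2 = d
    rw [h]
end

section
/- Let f : ℝ → ℂ be a C^2 function defined near points where it vanishes. There exists a differentiable function g defined on ℝ with g(t)^2 = f(t) for all t if and only if there exists a continuous function g with g^2 = f such that f vanishes of order ≥ 2 at each of its zeros, i.e., at every t_0 with f(t_0) = 0 one has f'(t_0) = 0 and the multiplicity of f at t_0 is ≥ 2. -/
open Filter Topology Set Metric Complex

set_option linter.unusedTactic false
set_option linter.unreachableTactic false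

/-- Sign functions on ord-connected sets are constant (IVT). -/
lemma sign_const {e : ℝ → ℂ} {s : Set ℝ} (hs : s.OrdConnected)
    (he : ContinuousOn e s) (hpm : ∀ t ∈ s, e t = 1 ∨ e t = -1)
    {x y : ℝ} (hx : x ∈ s) (hy : y ∈ s) : e x = e y := by
  by_contra hne
  have hsub : uIcc x y ⊆ s := hs.uIcc_subset hx hy
  have hcont : ContinuousOn (fun t => (e t).re) (uIcc x y) :=
    (Complex.continuous_re.comp_continuousOn (he.mono hsub))
  have h0 : (0:ℝ) ∈ uIcc ((e x).re) ((e y).re) := by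
    rcases hpm x hx with h1 | h1 <;> rcases hpm y hy with h2 | h2 <;>
      simp [h1, h2] at hne ⊢ <;> rw [Set.mem_uIcc] <;> norm_num
  obtain ⟨c, hc, hc0⟩ := intermediate_value_uIcc hcont h0
  simp only at hc0
  rcases hpm c (hsub hc) with h | h <;> rw [h] at hc0 <;> norm_num at hc0

/-- A compact set all of whose points are isolated in it is finite. -/
lemma finite_of_compact_isolated {K : Set ℝ} (hK : IsCompact K)
    (hiso : ∀ x ∈ K, ∀ᶠ y in 𝓝 x, y ∈ K → y = x) : K.Finite := by
  classical
  have hU : ∀ x : ℝ, ∃ u : Set ℝ, x ∈ K → (u ∈ 𝓝 x ∧ ∀ y ∈ u, y ∈ K → y = x) := by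
    intro x
    by_cases hx : x ∈ K
    · obtain ⟨u, hu1, hu2⟩ := (hiso x hx).exists_mem
      exact ⟨u, fun _ => ⟨hu1, hu2⟩⟩
    · exact ⟨univ, fun h => absurd h hx⟩
  choose U hU using hU
  obtain ⟨t, htK, hcov⟩ := hK.elim_nhds_subcover U (fun x hx => (hU x hx).1)
  refine Set.Finite.subset t.finite_toSet ?_
  intro y hy
  obtain ⟨x, hxt, hyU⟩ := Set.mem_iUnion₂.1 (hcov hy)
  have := (hU x (htK x hxt)).2 y hyU hy
  rwa [this]

lemma uIoc_diff {b s t x : ℝ} (h1 : x ∈ Set.uIoc b s) (h2 : x ∉ Set.uIoc b t) :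
    x ∈ Set.uIcc s t := by
  rw [Set.mem_uIoc] at h1 h2
  rw [Set.mem_uIcc]
  push_neg at h2
  obtain ⟨h2a, h2b⟩ := h2
  rcases h1 with ⟨hbx, hxs⟩ | ⟨hsx, hxb⟩
  · exact Or.inr ⟨(h2a hbx).le, hxs⟩
  · refine Or.inl ⟨hsx.le, ?_⟩
    by_contra hxt
    exact absurd hxb (not_le.2 (h2b (not_le.1 hxt)))

lemma ncard_split {D : Set ℝ} {x y z : ℝ} (hxy : x ≤ y) (hyz : y ≤ z)
    (hfin : (D ∩ Set.Ioc x z).Finite) :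
    (D ∩ Set.Ioc x z).ncard = (D ∩ Set.Ioc x y).ncard + (D ∩ Set.Ioc y z).ncard := by
  have hun : Set.Ioc x y ∪ Set.Ioc y z = Set.Ioc x z := Set.Ioc_union_Ioc_eq_Ioc hxy hyz
  have hsub1 : D ∩ Set.Ioc x y ⊆ D ∩ Set.Ioc x z := by
    rw [← hun]; exact Set.inter_subset_inter_right _ Set.subset_union_left
  have hsub2 : D ∩ Set.Ioc y z ⊆ D ∩ Set.Ioc x z := by
    rw [← hun]; exact Set.inter_subset_inter_right _ Set.subset_union_right
  rw [← hun, Set.inter_union_distrib_left]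
  refine Set.ncard_union_eq ?_ (hfin.subset hsub1) (hfin.subset hsub2)
  refine Set.disjoint_of_subset Set.inter_subset_right Set.inter_subset_right ?_
  rw [Set.disjoint_left]
  intro a ha1 ha2
  exact absurd ha2.1 (not_lt.2 ha1.2)

/-- Lemma A: a continuous square root is differentiable at points where f ≠ 0. -/
lemma diffAt_of_sq {f g : ℝ → ℂ} {x : ℝ}
    (hsq : ∀ᶠ s in 𝓝 x, g s ^ 2 = f s) (hgc : ContinuousAt g x)
    (hfd : DifferentiableAt ℝ f x) (hx : f x ≠ 0) :
    DifferentiableAt ℝ g x := by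
  have hgx : g x ≠ 0 := by
    intro h
    rw [← hsq.self_of_nhds, h] at hx; simp at hx
  have h2 : g x + g x ≠ 0 := by
    intro h
    apply hgx
    have h2 : (2 : ℂ) * g x = 0 := by linear_combination h
    have := mul_eq_zero.1 h2
    simpa using this
  have hden : ∀ᶠ s in 𝓝[≠] x, g s + g x ≠ 0 :=
    (((hgc.tendsto.mono_left nhdsWithin_le_nhds).add tendsto_const_nhds).eventually_ne h2)
  have heq : ∀ᶠ s in 𝓝[≠] x, slope g x s = slope f x s * (g s + g x)⁻¹ := by
    filter_upwards [hden, (hsq.filter_mono nhdsWithin_le_nhds)] with s hs hsq'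
    have key : g s - g x = (f s - f x) * (g s + g x)⁻¹ := by
      field_simp
      linear_combination hsq' - hsq.self_of_nhds
    simp only [slope_def_module, key]
    rw [smul_mul_assoc]
  have hlim : Tendsto (fun s => slope f x s * (g s + g x)⁻¹) (𝓝[≠] x)
      (𝓝 (deriv f x * (g x + g x)⁻¹)) := by
    refine Tendsto.mul ?_ ?_
    · exact hasDerivAt_iff_tendsto_slope.1 hfd.hasDerivAt
    · exact (((hgc.tendsto.mono_left nhdsWithin_le_nhds).add tendsto_const_nhds).inv₀ h2)
  exact (hasDerivAt_iff_tendsto_slope.2 (Tendsto.congr' (heq.mono fun s hs => hs.symm) hlim)).differentiableAt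

/-- Lemma B: at a zero of order > 2 any square root is differentiable with derivative 0. -/
lemma diffAt_of_flat {f g : ℝ → ℂ} {x : ℝ}
    (hsq : ∀ᶠ s in 𝓝 x, g s ^ 2 = f s) (hg0 : g x = 0)
    (hflat : Tendsto (fun s => ‖f s‖ / (s - x) ^ 2) (𝓝 x) (𝓝 0)) :
    HasDerivAt g 0 x := by
  rw [hasDerivAt_iff_tendsto_slope]
  have hbound : ∀ᶠ s in 𝓝[≠] x, ‖slope g x s‖ ≤ Real.sqrt (‖f s‖ / (s - x) ^ 2) := by
    filter_upwards [hsq.filter_mono nhdsWithin_le_nhds] with s hsq'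
    have h1 : ‖g s‖ = Real.sqrt ‖f s‖ := by
      rw [← hsq', norm_pow]
      exact (Real.sqrt_sq (norm_nonneg _)).symm
    rw [slope_def_module, hg0, sub_zero, norm_smul, norm_inv, Real.norm_eq_abs, h1]
    exact le_of_eq (by rw [Real.sqrt_div (norm_nonneg _), Real.sqrt_sq_eq_abs, div_eq_inv_mul])
  have hsqrt : Tendsto (fun s => Real.sqrt (‖f s‖ / (s - x) ^ 2)) (𝓝[≠] x) (𝓝 0) := by
    have h2' : Tendsto (fun s => ‖f s‖ / (s - x) ^ 2) (𝓝[≠] x) (𝓝 0) :=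
      hflat.mono_left nhdsWithin_le_nhds
    have := (Real.continuous_sqrt.tendsto 0).comp h2'
    simpa only [Function.comp_def, Real.sqrt_zero] using this
  exact squeeze_zero_norm' hbound hsqrt

lemma forward_dir {f g : ℝ → ℂ} (hg : Differentiable ℝ g) (hsq : ∀ t, g t ^ 2 = f t)
    {t0 : ℝ} (h0 : f t0 = 0) :
    deriv f t0 = 0 ∧
      ∃ h : ℝ → ℂ, Continuous h ∧ ∀ᶠ t in 𝓝 t0, f t = ((t : ℂ) - t0) ^ 2 * h t := by
  classical
  have hfg : (fun t => g t ^ 2) = f := funext hsq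
  have hg0 : g t0 = 0 := by
    have := hsq t0
    rw [h0, pow_eq_zero_iff (two_ne_zero)] at this
    exact this
  have hslope : Tendsto (slope g t0) (𝓝[≠] t0) (𝓝 (deriv g t0)) :=
    hasDerivAt_iff_tendsto_slope.1 (hg t0).hasDerivAt
  constructor
  · have hfg' : (fun t => g t * g t) = f := by
      funext t; rw [← hsq t]; ring
    have h2 := ((hg t0).hasDerivAt).mul ((hg t0).hasDerivAt)
    rw [show g * g = f from hfg'] at h2
    rw [h2.deriv, hg0]
    ring
  · set h : ℝ → ℂ := fun t => if t = t0 then (deriv g t0) ^ 2 else f t / ((t : ℂ) - t0) ^ 2 with hh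
    have hfc : Continuous f := by rw [← hfg]; exact hg.continuous.pow 2
    have hfac : ∀ t, f t = ((t : ℂ) - t0) ^ 2 * h t := by
      intro t
      by_cases ht : t = t0
      · subst ht; simp [h0]
      · have hne : ((t : ℂ) - t0) ^ 2 ≠ 0 := by
          apply pow_ne_zero
          rw [sub_ne_zero]
          exact_mod_cast ht
        rw [hh]; simp only [if_neg ht]
        rw [mul_div_cancel₀ _ hne]
    refine ⟨h, ?_, Eventually.of_forall hfac⟩
    rw [continuous_iff_continuousAt]
    intro t
    by_cases ht : t = t0
    · subst ht
      have key : Tendsto h (𝓝[≠] t) (𝓝 ((deriv g t) ^ 2)) := by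
        have hs2 : Tendsto (fun s => (slope g t s) ^ 2) (𝓝[≠] t) (𝓝 ((deriv g t) ^ 2)) :=
          hslope.pow 2
        refine hs2.congr' ?_
        filter_upwards [eventually_mem_nhdsWithin] with s hs
        have hst : s ≠ t := hs
        have hcne : ((s : ℂ) - t) ≠ 0 := by
          rw [sub_ne_zero]; exact_mod_cast hst
        rw [hh]; simp only [if_neg hst]
        have hsl : slope g t s = g s / ((s : ℂ) - t) := by
          rw [slope_def_module, hg0, sub_zero, Complex.real_smul]
          push_cast
          ring
        rw [hsl, div_pow, hsq s]
      have hpure : Tendsto h (pure t) (𝓝 (deriv g t ^ 2)) := by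
        have : h t = deriv g t ^ 2 := by rw [hh]; simp
        rw [← this]
        exact tendsto_pure_nhds h t
      have : Tendsto h (𝓝 t) (𝓝 (deriv g t ^ 2)) := by
        rw [← nhdsNE_sup_pure]
        exact key.sup hpure
      have ht0 : h t = deriv g t ^ 2 := by rw [hh]; simp
      rw [ContinuousAt, ht0]
      exact this
    · have hne : ((t : ℂ) - t0) ^ 2 ≠ 0 := by
        apply pow_ne_zero; rw [sub_ne_zero]; exact_mod_cast ht
      have hca : ContinuousAt (fun s => f s / ((s : ℂ) - t0) ^ 2) t := by
        apply ContinuousAt.div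
        · exact hfc.continuousAt
        · fun_prop
        · exact hne
      apply hca.congr
      have hopen : ∀ᶠ s in 𝓝 t, s ≠ t0 :=
        (isOpen_compl_singleton.eventually_mem (by exact ht))
      filter_upwards [hopen] with s hs
      rw [hh]; simp only [if_neg hs]

lemma parity_exists {Z0 D : Set ℝ} (hclosed : IsClosed (D ∪ Z0)) (hZ0 : IsClosed Z0)
    (hDZ : ∀ x ∈ D, x ∉ Z0)
    (hiso : ∀ x ∈ D, ∀ᶠ y in 𝓝[≠] x, y ∉ D) :
    ∃ p : ℝ → ℂ, (∀ t, p t = 1 ∨ p t = -1) ∧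
      (∀ t, t ∉ D ∪ Z0 → ∀ᶠ s in 𝓝 t, p s = p t) ∧
      (∀ t ∈ D, ∃ a : ℂ, (∀ᶠ s in 𝓝[>] t, p s = a) ∧ (∀ᶠ s in 𝓝[<] t, p s = -a)) := by
  classical
  set W : Set ℝ := Z0ᶜ with hW
  have hWopen : IsOpen W := hZ0.isOpen_compl
  set J : ℝ → Set ℝ := fun t => connectedComponentIn W t with hJ
  have hJW : ∀ t, J t ⊆ W := fun t => connectedComponentIn_subset W t
  -- each component minus D is nonempty
  have hne : ∀ t, t ∈ W → (J t \ D).Nonempty := by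
    intro t ht
    by_cases htD : t ∈ D
    · have h1 : ∀ᶠ y in 𝓝 t, y ≠ t → y ∉ D := by
        have := hiso t htD
        rwa [eventually_nhdsWithin_iff] at this
      have h2 : ∀ᶠ y in 𝓝 t, y ∈ W := hWopen.eventually_mem ht
      obtain ⟨ε, hε, hball⟩ := Metric.eventually_nhds_iff.1 (h1.and h2)
      have hsubJ : Metric.ball t ε ⊆ J t :=
        (convex_ball t ε).isPreconnected.subset_connectedComponentIn
          (Metric.mem_ball_self hε) (fun y hy => (hball (Metric.mem_ball.1 hy)).2)
      refine ⟨t + ε/2, hsubJ ?_, ?_⟩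
      · rw [Metric.mem_ball, Real.dist_eq]
        rw [abs_sub_lt_iff]; constructor <;> linarith
      · have hdist : dist (t + ε/2) t < ε := by
          rw [Real.dist_eq, abs_sub_lt_iff]; constructor <;> linarith
        exact (hball hdist).1 (by linarith)
    · exact ⟨t, mem_connectedComponentIn ht, htD⟩
  -- basepoint selector
  set bsel : Set ℝ → ℝ := fun A => if h : (A \ D).Nonempty then h.some else 0 with hbsel
  set b : ℝ → ℝ := fun t => bsel (J t) with hb
  have hbmem : ∀ t, t ∈ W → b t ∈ J t ∧ b t ∉ D := by
    intro t ht
    have h := hne t ht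
    have : b t = h.some := by rw [hb]; simp only [hbsel]; rw [dif_pos h]
    rw [this]
    exact h.some_mem
  -- finiteness of D within intervals in a component
  have hfin : ∀ t, t ∈ W → ∀ x ∈ J t, ∀ y ∈ J t, (D ∩ Set.uIoc x y).Finite := by
    intro t ht x hx y hy
    have hsubJ : Set.uIcc x y ⊆ J t :=
      (isPreconnected_connectedComponentIn).ordConnected.uIcc_subset hx hy
    have hKeq : D ∩ Set.uIcc x y = (D ∪ Z0) ∩ Set.uIcc x y := by
      ext z
      constructor
      · exact fun ⟨h1, h2⟩ => ⟨Or.inl h1, h2⟩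
      · rintro ⟨h1 | h1, h2⟩
        · exact ⟨h1, h2⟩
        · exact absurd h1 (hJW t (hsubJ h2))
    have hKcpt : IsCompact (D ∩ Set.uIcc x y) := by
      rw [hKeq]
      exact isCompact_uIcc.inter_left hclosed
    have hKfin : (D ∩ Set.uIcc x y).Finite := by
      refine finite_of_compact_isolated hKcpt ?_
      intro z hz
      have h1 : ∀ᶠ y in 𝓝 z, y ≠ z → y ∉ D := by
        have := hiso z hz.1
        rwa [eventually_nhdsWithin_iff] at this
      filter_upwards [h1] with y hy hyK
      by_contra hyz
      exact hy hyz hyK.1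
    refine hKfin.subset (Set.inter_subset_inter_right _ ?_)
    rw [Set.uIoc, Set.uIcc]
    exact Set.Ioc_subset_Icc_self
  set n : ℝ → ℕ := fun t => (D ∩ Set.uIoc (b t) t).ncard with hn
  set p : ℝ → ℂ := fun t => if t ∈ Z0 then 1 else (-1) ^ n t with hp
  have hpval : ∀ t, p t = 1 ∨ p t = -1 := by
    intro t
    rw [hp]
    by_cases ht : t ∈ Z0
    · simp [ht]
    · simp only [if_neg ht]
      rcases Nat.even_or_odd (n t) with h | h
      · exact Or.inl h.neg_one_pow
      · exact Or.inr h.neg_one_pow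
  have hbeq : ∀ t s, s ∈ J t → b s = b t := by
    intro t s hs
    have h : J t = J s := connectedComponentIn_eq hs
    show bsel (J s) = bsel (J t)
    rw [h]
  have htJ : ∀ t, t ∈ W → t ∈ J t := fun t ht => mem_connectedComponentIn ht
  refine ⟨p, hpval, ?_, ?_⟩
  · -- local constancy away from D ∪ Z0
    intro t ht
    have htW : t ∈ W := fun h => ht (Or.inr h)
    obtain ⟨ε, hε, hball⟩ := Metric.isOpen_iff.1 hclosed.isOpen_compl t ht
    have hballW : Metric.ball t ε ⊆ W := fun y hy hZ => (hball hy) (Or.inr hZ)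
    have hballJ : Metric.ball t ε ⊆ J t :=
      (convex_ball t ε).isPreconnected.subset_connectedComponentIn
        (Metric.mem_ball_self hε) hballW
    rw [Metric.eventually_nhds_iff]
    refine ⟨ε, hε, fun s hs => ?_⟩
    have hsball : s ∈ Metric.ball t ε := Metric.mem_ball.2 hs
    have hsJ : s ∈ J t := hballJ hsball
    have hbeq' : b s = b t := hbeq t s hsJ
    have hsZ0 : s ∉ Z0 := fun h => hball hsball (Or.inr h)
    have htZ0 : t ∉ Z0 := fun h => ht (Or.inr h)
    have hord : (Metric.ball t ε).OrdConnected := (convex_ball t ε).ordConnected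
    have hset : D ∩ Set.uIoc (b t) s = D ∩ Set.uIoc (b t) t := by
      ext z
      constructor
      · rintro ⟨hzD, hzI⟩
        refine ⟨hzD, ?_⟩
        by_contra hzI2
        have h1 : z ∈ Set.uIcc s t := uIoc_diff hzI hzI2
        have h2 : z ∈ Metric.ball t ε :=
          hord.uIcc_subset hsball (Metric.mem_ball_self hε) h1
        exact hball h2 (Or.inl hzD)
      · rintro ⟨hzD, hzI⟩
        refine ⟨hzD, ?_⟩
        by_contra hzI2
        have h1 : z ∈ Set.uIcc t s := uIoc_diff hzI hzI2
        have h2 : z ∈ Metric.ball t ε :=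
          hord.uIcc_subset (Metric.mem_ball_self hε) hsball h1
        exact hball h2 (Or.inl hzD)
    show (if s ∈ Z0 then 1 else ((-1:ℂ)) ^ n s) = (if t ∈ Z0 then 1 else ((-1:ℂ)) ^ n t)
    rw [if_neg hsZ0, if_neg htZ0]
    have : n s = n t := by
      show (D ∩ Set.uIoc (b s) s).ncard = (D ∩ Set.uIoc (b t) t).ncard
      rw [hbeq', hset]
    rw [this]
  · -- flip at points of D
    intro t htD
    have htZ0 : t ∉ Z0 := hDZ t htD
    have htW : t ∈ W := htZ0
    have h1 : ∀ᶠ y in 𝓝 t, y ≠ t → y ∉ D := by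
      have := hiso t htD
      rwa [eventually_nhdsWithin_iff] at this
    have h2 : ∀ᶠ y in 𝓝 t, y ∈ W := hWopen.eventually_mem htW
    obtain ⟨ε, hε, hball⟩ := Metric.eventually_nhds_iff.1 (h1.and h2)
    have hballJ : Metric.ball t ε ⊆ J t :=
      (convex_ball t ε).isPreconnected.subset_connectedComponentIn
        (Metric.mem_ball_self hε) (fun y hy => (hball (Metric.mem_ball.1 hy)).2)
    obtain ⟨hβJ, hβD⟩ := hbmem t htW
    have hβt : b t ≠ t := fun h => hβD (by rw [h]; exact htD)
    have hDloc : ∀ z : ℝ, dist z t < ε → z ≠ t → z ∉ D := fun z hz => (hball hz).1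
    have hE : ∀ u v : ℝ, (∀ z, z ∈ Set.Ioc u v → dist z t < ε ∧ z ≠ t) →
        D ∩ Set.Ioc u v = ∅ := by
      intro u v hsub
      rw [Set.eq_empty_iff_forall_notMem]
      rintro z ⟨hzD, hzI⟩
      obtain ⟨ha, hb⟩ := hsub z hzI
      exact hDloc z ha hb hzD
    have hT : ∀ u v : ℝ, u < t → t ≤ v → (∀ z, z ∈ Set.Ioc u v → z ≠ t → dist z t < ε) →
        D ∩ Set.Ioc u v = {t} := by
      intro u v hu hv hsub
      ext z
      simp only [Set.mem_inter_iff, Set.mem_Ioc, Set.mem_singleton_iff]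
      constructor
      · rintro ⟨hzD, hzI⟩
        by_contra hzt
        exact hDloc z (hsub z hzI hzt) hzt hzD
      · rintro rfl
        exact ⟨htD, hu, hv⟩
    have hfin' : ∀ x, x ∈ J t → ∀ z, z ∈ J t → x ≤ z → (D ∩ Set.Ioc x z).Finite := by
      intro x hx z hz hxz
      have := hfin t htW x hx z hz
      rwa [Set.uIoc_of_le hxz] at this
    have hmem3 : ∀ s : ℝ, dist s t < ε → s ∈ J t ∧ b s = b t ∧ s ∉ Z0 := by
      intro s hs
      have hsJ : s ∈ J t := hballJ (Metric.mem_ball.2 hs)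
      exact ⟨hsJ, hbeq t s hsJ, fun h => (hball hs).2 h⟩
    refine ⟨(-1) ^ n t, ?_, ?_⟩
    · -- right side : p s = (-1)^(n t)
      rw [eventually_nhdsWithin_iff, Metric.eventually_nhds_iff]
      refine ⟨ε, hε, fun s hdist hst => ?_⟩
      have hts : t < s := hst
      obtain ⟨hsJ, hbe, hsZ0⟩ := hmem3 s hdist
      have hstdist : s - t < ε := by
        rw [Real.dist_eq, abs_sub_lt_iff] at hdist
        exact hdist.1
      have hkey : n s = n t := by
        show (D ∩ Set.uIoc (b s) s).ncard = (D ∩ Set.uIoc (b t) t).ncard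
        rw [hbe]
        rcases hβt.lt_or_gt with hβlt | hβgt
        · -- b t < t < s
          rw [Set.uIoc_of_le (by linarith : b t ≤ s), Set.uIoc_of_le (le_of_lt hβlt)]
          rw [ncard_split (le_of_lt hβlt) (le_of_lt hts)
            (hfin' _ hβJ _ hsJ (by linarith))]
          have : D ∩ Set.Ioc t s = ∅ := by
            refine hE t s fun z hz => ⟨?_, ?_⟩
            · rw [Real.dist_eq, abs_sub_lt_iff]
              constructor <;> [linarith [hz.1, hz.2]; linarith [hz.1]]
            · exact fun h => absurd hz.1 (by rw [h]; exact lt_irrefl t)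
          rw [this, Set.ncard_empty, add_zero]
        · -- t < b t
          rw [Set.uIoc_comm (b t) s, Set.uIoc_comm (b t) t,
            Set.uIoc_of_le (le_of_lt hβgt)]
          rcases le_or_gt s (b t) with hsβ | hβs
          · rw [Set.uIoc_of_le hsβ]
            rw [ncard_split (le_of_lt hts) hsβ (hfin' _ (htJ t htW) _ hβJ (by linarith))]
            have : D ∩ Set.Ioc t s = ∅ := by
              refine hE t s fun z hz => ⟨?_, ?_⟩
              · rw [Real.dist_eq, abs_sub_lt_iff]
                constructor <;> [linarith [hz.1, hz.2]; linarith [hz.1]]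
              · exact fun h => absurd hz.1 (by rw [h]; exact lt_irrefl t)
            rw [this, Set.ncard_empty, zero_add]
          · rw [Set.uIoc_comm s (b t), Set.uIoc_of_le (le_of_lt hβs)]
            have he1 : D ∩ Set.Ioc (b t) s = ∅ := by
              refine hE (b t) s fun z hz => ⟨?_, ?_⟩
              · rw [Real.dist_eq, abs_sub_lt_iff]
                constructor <;> [linarith [hz.1, hz.2]; linarith [hz.1]]
              · exact fun h => by rw [h] at hz; linarith [hz.1]
            have he2 : D ∩ Set.Ioc t (b t) = ∅ := by
              refine hE t (b t) fun z hz => ⟨?_, ?_⟩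
              · rw [Real.dist_eq, abs_sub_lt_iff]
                constructor <;> [linarith [hz.1, hz.2]; linarith [hz.1]]
              · exact fun h => absurd hz.1 (by rw [h]; exact lt_irrefl t)
            rw [he1, he2]
      show (if s ∈ Z0 then 1 else ((-1:ℂ)) ^ n s) = (-1) ^ n t
      rw [if_neg hsZ0, hkey]
    · -- left side : p s = -(-1)^(n t)
      rw [eventually_nhdsWithin_iff, Metric.eventually_nhds_iff]
      refine ⟨ε, hε, fun s hdist hst => ?_⟩
      have hts : s < t := hst
      obtain ⟨hsJ, hbe, hsZ0⟩ := hmem3 s hdist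
      have hstdist : t - s < ε := by
        rw [Real.dist_eq, abs_sub_lt_iff] at hdist
        exact hdist.2
      have hkey : n t = n s + 1 ∨ n s = n t + 1 := by
        have hns : n s = (D ∩ Set.uIoc (b t) s).ncard := by
          show (D ∩ Set.uIoc (b s) s).ncard = _
          rw [hbe]
        have hnt : n t = (D ∩ Set.uIoc (b t) t).ncard := rfl
        have hTst : ∀ u : ℝ, s ≤ u → u < t → D ∩ Set.Ioc u t = {t} := by
          intro u hu1 hu2
          refine hT u t hu2 le_rfl fun z hz hzt => ?_
          rw [Real.dist_eq, abs_sub_lt_iff]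
          constructor
          · linarith [hz.2]
          · linarith [hz.1]
        rcases hβt.lt_or_gt with hβlt | hβgt
        · -- b t < t
          rcases le_or_gt (b t) s with hβs | hsβ
          · -- b t ≤ s < t : n t = n s + 1
            left
            rw [hnt, hns, Set.uIoc_of_le (le_of_lt hβlt), Set.uIoc_of_le hβs]
            rw [ncard_split hβs (le_of_lt hts) (hfin' _ hβJ _ (htJ t htW) (by linarith))]
            rw [hTst s le_rfl hts, Set.ncard_singleton]
          · -- s < b t < t : n s = 0, n t = 1
            left
            have h1 : D ∩ Set.Ioc s (b t) = ∅ := by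
              refine hE s (b t) fun z hz => ⟨?_, ?_⟩
              · rw [Real.dist_eq, abs_sub_lt_iff]
                constructor <;> [linarith [hz.2]; linarith [hz.1]]
              · exact fun h => by rw [h] at hz; linarith [hz.2]
            have h2 : D ∩ Set.Ioc (b t) t = {t} := hTst (b t) (le_of_lt hsβ) hβlt
            rw [hnt, hns, Set.uIoc_of_le (le_of_lt hβlt), Set.uIoc_comm,
              Set.uIoc_of_le (le_of_lt hsβ), h1, h2, Set.ncard_singleton, Set.ncard_empty]
        · -- s < t < b t : n s = n t + 1
          right
          rw [hnt, hns, Set.uIoc_comm (b t) s, Set.uIoc_of_le (by linarith : s ≤ b t),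
            Set.uIoc_comm (b t) t, Set.uIoc_of_le (le_of_lt hβgt)]
          rw [ncard_split (le_of_lt hts) (le_of_lt hβgt)
            (hfin' _ hsJ _ hβJ (by linarith))]
          rw [hTst s le_rfl hts, Set.ncard_singleton]
          omega
      show (if s ∈ Z0 then 1 else ((-1:ℂ)) ^ n s) = -(-1) ^ n t
      rw [if_neg hsZ0]
      rcases hkey with h | h
      · rw [h, pow_succ]; ring
      · rw [h, pow_succ]; ring

/-- At a zero of exact order two, `g0` equals a sign times `(t - t0) * sb t` on each side. -/
lemma branch_data {f g0 h : ℝ → ℂ} {t0 : ℝ}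
    (hg0c : Continuous g0) (hsq : ∀ t, g0 t ^ 2 = f t)
    (hhc : Continuous h) (hfac : ∀ᶠ t in 𝓝 t0, f t = ((t : ℂ) - t0) ^ 2 * h t)
    (hc : h t0 ≠ 0) :
    ∃ δ : ℝ, 0 < δ ∧ ∃ sb : ℝ → ℂ, ∃ ep em : ℂ,
      (ep = 1 ∨ ep = -1) ∧ (em = 1 ∨ em = -1) ∧
      ContinuousOn sb (Metric.ball t0 δ) ∧
      (∀ t ∈ Metric.ball t0 δ, t ≠ t0 → f t ≠ 0) ∧
      (∀ t ∈ Metric.ball t0 δ, t0 < t → g0 t = ep * (((t : ℂ) - t0) * sb t)) ∧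
      (∀ t ∈ Metric.ball t0 δ, t < t0 → g0 t = em * (((t : ℂ) - t0) * sb t)) := by
  classical
  set c : ℂ := h t0 with hcdef
  have hcont : ∀ᶠ t in 𝓝 t0, ‖h t - c‖ < ‖c‖ / 2 := by
    have : Tendsto h (𝓝 t0) (𝓝 c) := hhc.continuousAt
    have h2 : Tendsto (fun t => ‖h t - c‖) (𝓝 t0) (𝓝 0) := by
      have := (this.sub_const c).norm
      simpa using this
    exact h2.eventually_lt_const (div_pos (norm_pos_iff.2 hc) two_pos)
  obtain ⟨δ, hδ, hball⟩ := Metric.eventually_nhds_iff.1 (hcont.and hfac)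
  have hne0 : ∀ t : ℝ, dist t t0 < δ → h t ≠ 0 := by
    intro t ht h0
    have := (hball ht).1
    rw [h0] at this
    simp only [zero_sub, norm_neg] at this
    linarith [this, norm_nonneg c]
  have hslit : ∀ t : ℝ, dist t t0 < δ → (h t / c) ∈ Complex.slitPlane := by
    intro t ht
    rw [Complex.mem_slitPlane_iff]
    left
    have h1 : ‖h t / c - 1‖ < 1 / 2 := by
      rw [div_sub_one hc, norm_div]
      rw [div_lt_iff₀ (norm_pos_iff.2 hc)]
      calc ‖h t - c‖ < ‖c‖ / 2 := (hball ht).1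
        _ = 1 / 2 * ‖c‖ := by ring
    have h2 : |(h t / c).re - 1| ≤ ‖h t / c - 1‖ := by
      have := Complex.abs_re_le_norm (h t / c - 1)
      simpa using this
    have := abs_sub_lt_iff.1 (lt_of_le_of_lt h2 h1)
    linarith [this.2]
  set sb : ℝ → ℂ := fun t => (c ^ ((2:ℕ) : ℂ)⁻¹) * ((h t / c) ^ ((2:ℕ) : ℂ)⁻¹) with hsb
  have hsb2 : ∀ t : ℝ, sb t ^ 2 = h t := by
    intro t
    rw [hsb]
    simp only
    rw [mul_pow, Complex.cpow_nat_inv_pow _ (two_ne_zero), Complex.cpow_nat_inv_pow _ (two_ne_zero)]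
    exact mul_div_cancel₀ _ hc
  have hsbcont : ContinuousOn sb (Metric.ball t0 δ) := by
    intro t ht
    have htd : dist t t0 < δ := Metric.mem_ball.1 ht
    have h1 : ContinuousAt (fun z : ℂ => z ^ ((2:ℕ) : ℂ)⁻¹) (h t / c) :=
      continuousAt_cpow_const (hslit t htd)
    have h2 : ContinuousAt (fun s : ℝ => h s / c) t := ContinuousAt.div_const hhc.continuousAt c
    have h3 : ContinuousAt (fun s : ℝ => (h s / c) ^ ((2:ℕ) : ℂ)⁻¹) t := ContinuousAt.comp (g := fun z : ℂ => z ^ ((2:ℕ) : ℂ)⁻¹) (x := t) h1 h2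
    exact (continuousAt_const.mul h3).continuousWithinAt
  have hsbne : ∀ t : ℝ, dist t t0 < δ → sb t ≠ 0 := by
    intro t ht hsb0
    have := hsb2 t
    rw [hsb0] at this
    exact hne0 t ht (by rw [← this]; ring)
  have hfne : ∀ t ∈ Metric.ball t0 δ, t ≠ t0 → f t ≠ 0 := by
    intro t ht htt0
    rw [(hball (Metric.mem_ball.1 ht)).2]
    apply mul_ne_zero
    · apply pow_ne_zero
      rw [sub_ne_zero]
      exact_mod_cast htt0
    · exact hne0 t (Metric.mem_ball.1 ht)
  -- the sign function
  set e : ℝ → ℂ := fun t => g0 t / (((t : ℂ) - t0) * sb t) with he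
  have hrep : ∀ t ∈ Metric.ball t0 δ, t ≠ t0 → g0 t = e t * (((t : ℂ) - t0) * sb t) := by
    intro t ht htt0
    rw [he]
    simp only
    rw [div_mul_cancel₀]
    apply mul_ne_zero
    · rw [sub_ne_zero]; exact_mod_cast htt0
    · exact hsbne t (Metric.mem_ball.1 ht)
  have hepm : ∀ t ∈ Metric.ball t0 δ, t ≠ t0 → e t = 1 ∨ e t = -1 := by
    intro t ht htt0
    have htne : ((t : ℂ) - t0) ≠ 0 := by rw [sub_ne_zero]; exact_mod_cast htt0
    have hsbn := hsbne t (Metric.mem_ball.1 ht)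
    have hsq1 : e t ^ 2 = 1 := by
      rw [he]
      simp only
      rw [div_pow, mul_pow, hsq t, (hball (Metric.mem_ball.1 ht)).2, hsb2 t]
      rw [div_self (by exact mul_ne_zero (pow_ne_zero 2 htne) (hne0 t (Metric.mem_ball.1 ht)))]
    have : (e t - 1) * (e t + 1) = 0 := by linear_combination hsq1
    rcases mul_eq_zero.1 this with h1 | h1
    · left; exact sub_eq_zero.1 h1
    · right; exact eq_neg_of_add_eq_zero_left h1
  have hsubR : Set.Ioo t0 (t0 + δ) ⊆ Metric.ball t0 δ := by
    rw [Real.ball_eq_Ioo]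
    intro x hx
    exact ⟨by linarith [hx.1], hx.2⟩
  have hsubL : Set.Ioo (t0 - δ) t0 ⊆ Metric.ball t0 δ := by
    rw [Real.ball_eq_Ioo]
    intro x hx
    exact ⟨hx.1, by linarith [hx.2]⟩
  have hdenom : ContinuousOn (fun t : ℝ => ((t : ℂ) - t0) * sb t) (Metric.ball t0 δ) :=
    ((Complex.continuous_ofReal.sub continuous_const).continuousOn).mul hsbcont
  have hecont : ContinuousOn e (Metric.ball t0 δ \ {t0}) := by
    apply ContinuousOn.div (hg0c.continuousOn) (hdenom.mono Set.diff_subset)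
    intro x hx
    apply mul_ne_zero
    · rw [sub_ne_zero]
      have : x ≠ t0 := fun hh => hx.2 (by simp [hh])
      exact_mod_cast this
    · exact hsbne x (Metric.mem_ball.1 hx.1)
  have hRsub : Set.Ioo t0 (t0 + δ) ⊆ Metric.ball t0 δ \ {t0} := fun x hx =>
    ⟨hsubR hx, by simp only [Set.mem_singleton_iff]; intro hh; rw [hh] at hx; exact lt_irrefl t0 hx.1⟩
  have hLsub : Set.Ioo (t0 - δ) t0 ⊆ Metric.ball t0 δ \ {t0} := fun x hx =>
    ⟨hsubL hx, by simp only [Set.mem_singleton_iff]; intro hh; rw [hh] at hx; exact lt_irrefl t0 hx.2⟩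
  have hmidR : t0 + δ/2 ∈ Set.Ioo t0 (t0 + δ) := by constructor <;> linarith
  have hmidL : t0 - δ/2 ∈ Set.Ioo (t0 - δ) t0 := by constructor <;> linarith
  have hpmR : ∀ u ∈ Set.Ioo t0 (t0 + δ), e u = 1 ∨ e u = -1 := fun u hu =>
    hepm u (hRsub hu).1 (fun hh => (hRsub hu).2 (by simp [hh]))
  have hpmL : ∀ u ∈ Set.Ioo (t0 - δ) t0, e u = 1 ∨ e u = -1 := fun u hu =>
    hepm u (hLsub hu).1 (fun hh => (hLsub hu).2 (by simp [hh]))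
  refine ⟨δ, hδ, sb, e (t0 + δ/2), e (t0 - δ/2), hpmR _ hmidR, hpmL _ hmidL,
    hsbcont, hfne, ?_, ?_⟩
  · intro t ht htt0
    have htI : t ∈ Set.Ioo t0 (t0 + δ) := by
      rw [Real.ball_eq_Ioo] at ht
      exact ⟨htt0, ht.2⟩
    have hconst : e t = e (t0 + δ/2) :=
      sign_const Set.ordConnected_Ioo (hecont.mono hRsub) hpmR htI hmidR
    rw [← hconst]
    exact hrep t ht (ne_of_gt htt0)
  · intro t ht htt0
    have htI : t ∈ Set.Ioo (t0 - δ) t0 := by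
      rw [Real.ball_eq_Ioo] at ht
      exact ⟨ht.1, htt0⟩
    have hconst : e t = e (t0 - δ/2) :=
      sign_const Set.ordConnected_Ioo (hecont.mono hLsub) hpmL htI hmidL
    rw [← hconst]
    exact hrep t ht (ne_of_lt htt0)

lemma slope_tendsto_side {g sb : ℝ → ℂ} {t δ : ℝ} {A : ℂ} {l : Filter ℝ}
    (hδ : 0 < δ) (hl : l ≤ 𝓝 t) (hg : g t = 0)
    (hsb : ContinuousOn sb (Metric.ball t δ))
    (hrep : ∀ᶠ s in l, g s = A * (((s : ℂ) - t) * sb s))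
    (hne : ∀ᶠ s in l, s ≠ t) :
    Tendsto (slope g t) l (𝓝 (A * sb t)) := by
  have hcont : ContinuousAt sb t := hsb.continuousAt (Metric.ball_mem_nhds t hδ)
  have h1 : Tendsto (fun s => A * sb s) l (𝓝 (A * sb t)) :=
    tendsto_const_nhds.mul (hcont.tendsto.mono_left hl)
  refine Tendsto.congr' ?_ h1
  filter_upwards [hrep, hne] with s hs hst
  have hcne : ((s : ℂ) - t) ≠ 0 := by
    rw [sub_ne_zero]; exact_mod_cast hst
  rw [slope_def_module, hg, sub_zero, hs, Complex.real_smul]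
  have hcast : ((s - t : ℝ) : ℂ) = (s : ℂ) - t := by push_cast; ring
  rw [Complex.ofReal_inv, hcast]
  field_simp

lemma backward_dir {f : ℝ → ℂ} (hf : ContDiff ℝ 2 f)
    (g0 : ℝ → ℂ) (hg0c : Continuous g0) (hsq : ∀ t, g0 t ^ 2 = f t)
    (hvan : ∀ t0 : ℝ, f t0 = 0 → deriv f t0 = 0 ∧
        ∃ h : ℝ → ℂ, Continuous h ∧ ∀ᶠ t in 𝓝 t0, f t = ((t : ℂ) - t0) ^ 2 * h t) :
    ∃ g : ℝ → ℂ, Differentiable ℝ g ∧ ∀ t, g t ^ 2 = f t := by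
  classical
  have hfd : Differentiable ℝ f := hf.differentiable (by norm_num)
  have hfc : Continuous f := hfd.continuous
  have hg00 : ∀ t, f t = 0 → g0 t = 0 := by
    intro t ht
    have := hsq t
    rw [ht, pow_eq_zero_iff (two_ne_zero)] at this
    exact this
  -- choose the factorization witnesses
  have hH : ∀ t0 : ℝ, ∃ h : ℝ → ℂ, Continuous h ∧
      (f t0 = 0 → ∀ᶠ t in 𝓝 t0, f t = ((t : ℂ) - t0) ^ 2 * h t) := by
    intro t0
    by_cases h0 : f t0 = 0
    · obtain ⟨h, hc, hfac⟩ := (hvan t0 h0).2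
      exact ⟨h, hc, fun _ => hfac⟩
    · exact ⟨fun _ => 1, continuous_const, fun h => absurd h h0⟩
  choose hfun hfunc hfunfac using hH
  -- choose branch data at order-two zeros
  have hSD : ∀ t0 : ℝ, ∃ δ : ℝ, ∃ sb : ℝ → ℂ, ∃ ep em : ℂ,
      (f t0 = 0 ∧ hfun t0 t0 ≠ 0) →
      (0 < δ ∧ (ep = 1 ∨ ep = -1) ∧ (em = 1 ∨ em = -1) ∧
      ContinuousOn sb (Metric.ball t0 δ) ∧
      (∀ t ∈ Metric.ball t0 δ, t ≠ t0 → f t ≠ 0) ∧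
      (∀ t ∈ Metric.ball t0 δ, t0 < t → g0 t = ep * (((t : ℂ) - t0) * sb t)) ∧
      (∀ t ∈ Metric.ball t0 δ, t < t0 → g0 t = em * (((t : ℂ) - t0) * sb t))) := by
    intro t0
    by_cases hs : f t0 = 0 ∧ hfun t0 t0 ≠ 0
    · obtain ⟨δ, hδ, sb, ep, em, h1, h2, h3, h4, h5, h6⟩ :=
        branch_data hg0c hsq (hfunc t0) (hfunfac t0 hs.1) hs.2
      exact ⟨δ, sb, ep, em, fun _ => ⟨hδ, h1, h2, h3, h4, h5, h6⟩⟩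
    · exact ⟨1, fun _ => 1, 1, 1, fun h => absurd h hs⟩
  choose δsel sbsel epsel emsel hSD using hSD
  -- the relevant sets
  set Z0 : Set ℝ := {t | f t = 0 ∧ hfun t t = 0} with hZ0def
  set D : Set ℝ := {t | (f t = 0 ∧ hfun t t ≠ 0) ∧ epsel t * emsel t = -1} with hDdef
  have hDZ0 : ∀ x ∈ D, x ∉ Z0 := fun x hx h => hx.1.2 h.2
  have hZ0closed : IsClosed Z0 := by
    rw [← isOpen_compl_iff, Metric.isOpen_iff]
    intro t ht
    by_cases hft : f t = 0
    · have hS : hfun t t ≠ 0 := fun h => ht ⟨hft, h⟩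
      obtain ⟨hδ, -, -, -, hfne, -, -⟩ := hSD t ⟨hft, hS⟩
      refine ⟨δsel t, hδ, fun y hy => ?_⟩
      by_cases hyt : y = t
      · rw [hyt]; exact ht
      · exact fun hZ => hfne y hy hyt hZ.1
    · obtain ⟨ε, hε, hball⟩ := Metric.isOpen_iff.1 (isOpen_compl_iff.2 (isClosed_eq hfc continuous_const)) t hft
      exact ⟨ε, hε, fun y hy hZ => hball hy hZ.1⟩
  have hDZclosed : IsClosed (D ∪ Z0) := by
    rw [← isOpen_compl_iff, Metric.isOpen_iff]
    intro t ht
    by_cases hft : f t = 0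
    · have hS : hfun t t ≠ 0 := fun h => ht (Or.inr ⟨hft, h⟩)
      obtain ⟨hδ, -, -, -, hfne, -, -⟩ := hSD t ⟨hft, hS⟩
      refine ⟨δsel t, hδ, fun y hy => ?_⟩
      by_cases hyt : y = t
      · rw [hyt]; exact ht
      · rintro (hD | hZ)
        · exact hfne y hy hyt hD.1.1
        · exact hfne y hy hyt hZ.1
    · obtain ⟨ε, hε, hball⟩ := Metric.isOpen_iff.1 (isOpen_compl_iff.2 (isClosed_eq hfc continuous_const)) t hft
      refine ⟨ε, hε, fun y hy => ?_⟩
      rintro (hD | hZ)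
      · exact hball hy hD.1.1
      · exact hball hy hZ.1
  have hiso : ∀ x ∈ D, ∀ᶠ y in 𝓝[≠] x, y ∉ D := by
    intro x hx
    obtain ⟨hδ, -, -, -, hfne, -, -⟩ := hSD x hx.1
    rw [eventually_nhdsWithin_iff, Metric.eventually_nhds_iff]
    refine ⟨δsel x, hδ, fun y hy hyx hD => ?_⟩
    exact hfne y (Metric.mem_ball.2 hy) hyx hD.1.1
  obtain ⟨p, hpval, hploc, hpflip⟩ := parity_exists hDZclosed hZ0closed hDZ0 hiso
  have hp2 : ∀ t, p t ^ 2 = 1 := by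
    intro t
    rcases hpval t with h | h <;> rw [h] <;> ring
  set g : ℝ → ℂ := fun t => p t * g0 t with hgdef
  have hgsq : ∀ t, g t ^ 2 = f t := by
    intro t
    show (p t * g0 t) ^ 2 = f t
    rw [mul_pow, hp2, one_mul, hsq]
  refine ⟨g, ?_, hgsq⟩
  intro t
  by_cases hft : f t = 0
  · by_cases hS : hfun t t = 0
    · -- flat zero : lemma B
      have htZ0 : t ∈ Z0 := ⟨hft, hS⟩
      have hgt0 : g t = 0 := by
        show p t * g0 t = 0
        rw [hg00 t hft, mul_zero]
      have hflat : Tendsto (fun s => ‖f s‖ / (s - t) ^ 2) (𝓝 t) (𝓝 0) := by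
        have heq : ∀ᶠ s in 𝓝 t, ‖f s‖ / (s - t) ^ 2 = ‖hfun t s‖ := by
          filter_upwards [hfunfac t hft] with s hfs
          by_cases hst : s = t
          · subst hst
            rw [hft]
            simp [hS]
          · rw [hfs, norm_mul, norm_pow]
            have h1 : ‖(s : ℂ) - t‖ = |s - t| := by
              rw [show ((s:ℂ) - t) = ((s - t : ℝ) : ℂ) by push_cast; ring]
              exact Complex.norm_real _
            rw [h1, _root_.sq_abs, mul_comm, mul_div_assoc,
              div_self (pow_ne_zero 2 (sub_ne_zero.2 hst)), mul_one]
        have h2 : Tendsto (fun s => ‖hfun t s‖) (𝓝 t) (𝓝 0) := by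
          have := ((hfunc t).norm.tendsto t)
          rwa [hS, norm_zero] at this
        exact h2.congr' (heq.mono fun s hs => hs.symm)
      exact (diffAt_of_flat (Eventually.of_forall hgsq) hgt0 hflat).differentiableAt
    · -- order-two zero
      have htS : f t = 0 ∧ hfun t t ≠ 0 := ⟨hft, hS⟩
      obtain ⟨hδ, hep, hem, hsbc, hfne, hrepR, hrepL⟩ := hSD t htS
      have hg0t : g0 t = 0 := hg00 t hft
      have hgt0 : g t = 0 := by show p t * g0 t = 0; rw [hg0t, mul_zero]
      have hIooR : Set.Ioo t (t + δsel t) ∈ 𝓝[>] t :=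
        Ioo_mem_nhdsGT_of_mem ⟨le_refl t, by linarith⟩
      have hIooL : Set.Ioo (t - δsel t) t ∈ 𝓝[<] t :=
        Ioo_mem_nhdsLT_of_mem ⟨by linarith, le_refl t⟩
      have hballR : ∀ s ∈ Set.Ioo t (t + δsel t), s ∈ Metric.ball t (δsel t) := by
        intro s hs
        rw [Real.ball_eq_Ioo]
        exact ⟨by linarith [hs.1], hs.2⟩
      have hballL : ∀ s ∈ Set.Ioo (t - δsel t) t, s ∈ Metric.ball t (δsel t) := by
        intro s hs
        rw [Real.ball_eq_Ioo]
        exact ⟨hs.1, by linarith [hs.2]⟩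
      have hem2 : emsel t * emsel t = 1 := by
        rcases hem with h | h <;> rw [h] <;> ring
      -- two cases on membership in D
      by_cases htD : t ∈ D
      · obtain ⟨a, haR, haL⟩ := hpflip t htD
        have hkey : -a * emsel t = a * epsel t := by
          have hprod : epsel t * emsel t = -1 := htD.2
          have : epsel t = -emsel t := by
            have := congrArg (fun z => z * emsel t) hprod
            rw [mul_assoc, hem2, mul_one] at this
            rw [this]; ring
          rw [this]; ring
        have hR : Tendsto (slope g t) (𝓝[>] t) (𝓝 ((a * epsel t) * sbsel t t)) := by
          refine slope_tendsto_side hδ nhdsWithin_le_nhds hgt0 hsbc ?_ ?_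
          · filter_upwards [hIooR, haR] with s hs hps
            show p s * g0 s = _
            rw [hps, hrepR s (hballR s hs) hs.1]
            ring
          · filter_upwards [hIooR] with s hs
            exact fun h => absurd hs.1 (by rw [h]; exact lt_irrefl t)
        have hL : Tendsto (slope g t) (𝓝[<] t) (𝓝 ((a * epsel t) * sbsel t t)) := by
          have : Tendsto (slope g t) (𝓝[<] t) (𝓝 ((-a * emsel t) * sbsel t t)) := by
            refine slope_tendsto_side hδ nhdsWithin_le_nhds hgt0 hsbc ?_ ?_
            · filter_upwards [hIooL, haL] with s hs hps
              show p s * g0 s = _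
              rw [hps, hrepL s (hballL s hs) hs.2]
              ring
            · filter_upwards [hIooL] with s hs
              exact fun h => absurd hs.2 (by rw [h]; exact lt_irrefl t)
          rwa [hkey] at this
        have : Tendsto (slope g t) (𝓝[≠] t) (𝓝 ((a * epsel t) * sbsel t t)) := by
          rw [← nhdsLT_sup_nhdsGT t]
          exact hL.sup hR
        exact (hasDerivAt_iff_tendsto_slope.2 this).differentiableAt
      · have htDZ : t ∉ D ∪ Z0 := by
          rintro (h | h)
          · exact htD h
          · exact hS h.2
        have hploct := hploc t htDZ
        have hepem : epsel t = emsel t := by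
          have hprodne : epsel t * emsel t ≠ -1 := fun h => htD ⟨htS, h⟩
          rcases hep with h1 | h1 <;> rcases hem with h2 | h2 <;>
            simp [h1, h2] at hprodne ⊢
        have hR : Tendsto (slope g t) (𝓝[>] t) (𝓝 ((p t * epsel t) * sbsel t t)) := by
          refine slope_tendsto_side hδ nhdsWithin_le_nhds hgt0 hsbc ?_ ?_
          · filter_upwards [hIooR, hploct.filter_mono nhdsWithin_le_nhds] with s hs hps
            show p s * g0 s = _
            rw [hps, hrepR s (hballR s hs) hs.1]
            ring
          · filter_upwards [hIooR] with s hs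
            exact fun h => absurd hs.1 (by rw [h]; exact lt_irrefl t)
        have hL : Tendsto (slope g t) (𝓝[<] t) (𝓝 ((p t * epsel t) * sbsel t t)) := by
          rw [hepem]
          refine slope_tendsto_side hδ nhdsWithin_le_nhds hgt0 hsbc ?_ ?_
          · filter_upwards [hIooL, hploct.filter_mono nhdsWithin_le_nhds] with s hs hps
            show p s * g0 s = _
            rw [hps, hrepL s (hballL s hs) hs.2]
            ring
          · filter_upwards [hIooL] with s hs
            exact fun h => absurd hs.2 (by rw [h]; exact lt_irrefl t)
        have : Tendsto (slope g t) (𝓝[≠] t) (𝓝 ((p t * epsel t) * sbsel t t)) := by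
          rw [← nhdsLT_sup_nhdsGT t]
          exact hL.sup hR
        exact (hasDerivAt_iff_tendsto_slope.2 this).differentiableAt
  · -- f t ≠ 0
    have htDZ : t ∉ D ∪ Z0 := by
      rintro (h | h)
      · exact hft h.1.1
      · exact hft h.1
    have heq : g =ᶠ[𝓝 t] fun s => p t * g0 s := by
      filter_upwards [hploc t htDZ] with s hs
      show p s * g0 s = p t * g0 s
      rw [hs]
    rw [heq.differentiableAt_iff]
    refine diffAt_of_sq ?_ ((continuous_const.mul hg0c).continuousAt) (hfd t) hft
    refine Eventually.of_forall fun s => ?_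
    rw [mul_pow, hp2, one_mul, hsq]

/-- For a `C²` function `f : ℝ → ℂ` there is a differentiable square root of `f` if and only
if there is a continuous square root and `f` vanishes of order `≥ 2` at each of its zeros
(`f'(t₀) = 0` and the multiplicity of `f` at `t₀` is `≥ 2`). -/
theorem stmt13 (f : ℝ → ℂ) (hf : ContDiff ℝ 2 f) :
    (∃ g : ℝ → ℂ, Differentiable ℝ g ∧ ∀ t, g t ^ 2 = f t) ↔
      (∃ g : ℝ → ℂ, Continuous g ∧ ∀ t, g t ^ 2 = f t) ∧
      ∀ t0 : ℝ, f t0 = 0 → deriv f t0 = 0 ∧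
        ∃ h : ℝ → ℂ, Continuous h ∧ ∀ᶠ t in 𝓝 t0, f t = ((t : ℂ) - t0) ^ 2 * h t := by
  constructor
  · rintro ⟨g, hgd, hgsq⟩
    exact ⟨⟨g, hgd.continuous, hgsq⟩, fun t0 h0 => forward_dir hgd hgsq h0⟩
  · rintro ⟨⟨g0, hg0c, hsq⟩, hvan⟩
    exact backward_dir hf g0 hg0c hsq hvan
end

section
/- Let P(t)(z) = z^n + Σ_{j=2}^n (-1)^j a_j(t) z^{n-j} be a curve of monic polynomials (with a_1 = 0) whose coefficients a_j are continuous near 0 and satisfy a_j(t) = t^j b_j(t) near 0 for continuous functions b_j. If the polynomial curve Q(t)(z) = z^n + Σ_{j=2}^n (-1)^j b_j(t) z^{n-j} admits a continuous parameterization μ_1, ..., μ_n of its roots near 0, then λ_j(t) := t·μ_j(t) is a continuous parameterization of the roots of P near 0, and each λ_j is differentiable at 0 with λ_j'(0) = μ_j(0). -/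
open Finset Filter Topology

/-- Let `P(t)(z) = z^n + ∑_{j=2}^n (-1)^j a_j(t) z^{n-j}` with `a_j(t) = t^j b_j(t)` for
continuous `b_j` near `0`. If `Q(t)(z) = z^n + ∑_{j=2}^n (-1)^j b_j(t) z^{n-j}` admits a
continuous root parameterization `μ_1, …, μ_n` near `0`, then `λ_j(t) := t·μ_j(t)` is a
continuous parameterization of the roots of `P` near `0`, and each `λ_j` is differentiable
at `0` with `λ_j'(0) = μ_j(0)`. -/
theorem stmt14 (n : ℕ) (hn : 2 ≤ n) (U : Set ℝ) (hU : U ∈ 𝓝 (0 : ℝ))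
    (a b : ℕ → ℝ → ℂ)
    (hab : ∀ j, 2 ≤ j → j ≤ n → ∀ t ∈ U, a j t = (t : ℂ) ^ j * b j t)
    (hbcont : ∀ j, 2 ≤ j → j ≤ n → ContinuousOn (b j) U)
    (mu : Fin n → ℝ → ℂ) (hmucont : ∀ i, ContinuousOn (mu i) U)
    (hQ : ∀ t ∈ U, ∀ z : ℂ,
      z ^ n + ∑ j ∈ Finset.Icc 2 n, (-1 : ℂ) ^ j * b j t * z ^ (n - j)
        = ∏ i : Fin n, (z - mu i t)) :
    (∀ i, ContinuousOn (fun t : ℝ => (t : ℂ) * mu i t) U) ∧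
    (∀ t ∈ U, ∀ z : ℂ,
      z ^ n + ∑ j ∈ Finset.Icc 2 n, (-1 : ℂ) ^ j * a j t * z ^ (n - j)
        = ∏ i : Fin n, (z - (t : ℂ) * mu i t)) ∧
    (∀ i, HasDerivAt (fun t : ℝ => (t : ℂ) * mu i t) (mu i 0) 0) := by
  have h0U : (0 : ℝ) ∈ U := mem_of_mem_nhds hU
  refine ⟨?_, ?_, ?_⟩
  · intro i
    exact (Complex.continuous_ofReal.continuousOn).mul (hmucont i)
  · intro t ht z
    by_cases htz : (t : ℂ) = 0
    · have hsum : ∀ j ∈ Finset.Icc 2 n, (-1 : ℂ) ^ j * a j t * z ^ (n - j) = 0 := by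
        intro j hj
        simp only [Finset.mem_Icc] at hj
        rw [hab j hj.1 hj.2 t ht, htz, zero_pow (by omega : j ≠ 0)]
        ring
      rw [Finset.sum_eq_zero hsum, htz]
      simp
    · have h := hQ t ht (z / t)
      calc z ^ n + ∑ j ∈ Finset.Icc 2 n, (-1 : ℂ) ^ j * a j t * z ^ (n - j)
          = (t : ℂ) ^ n * ((z / t) ^ n
              + ∑ j ∈ Finset.Icc 2 n, (-1 : ℂ) ^ j * b j t * (z / t) ^ (n - j)) := by
            rw [mul_add, Finset.mul_sum]
            congr 1
            · rw [div_pow, mul_div_cancel₀ _ (pow_ne_zero n htz)]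
            · refine Finset.sum_congr rfl fun j hj => ?_
              simp only [Finset.mem_Icc] at hj
              rw [hab j hj.1 hj.2 t ht, div_pow]
              have hpow : (t : ℂ) ^ n = (t : ℂ) ^ j * (t : ℂ) ^ (n - j) := by
                rw [← pow_add, Nat.add_sub_cancel' hj.2]
              rw [hpow]
              field_simp
        _ = (t : ℂ) ^ n * ∏ i : Fin n, (z / t - mu i t) := by rw [h]
        _ = ∏ i : Fin n, ((t : ℂ) * (z / t - mu i t)) := by
            rw [Finset.prod_mul_distrib, Finset.prod_const, Finset.card_univ,
              Fintype.card_fin]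
        _ = ∏ i : Fin n, (z - (t : ℂ) * mu i t) := by
            refine Finset.prod_congr rfl fun i _ => ?_
            field_simp
  · intro i
    have hcont : ContinuousAt (mu i) 0 := (hmucont i).continuousAt hU
    rw [hasDerivAt_iff_tendsto_slope]
    have heq : slope (fun t : ℝ => (t : ℂ) * mu i t) 0 =ᶠ[𝓝[≠] (0:ℝ)] fun t => mu i t := by
      filter_upwards [self_mem_nhdsWithin] with t ht
      have ht' : t ≠ 0 := ht
      simp only [slope, vsub_eq_sub, sub_zero, Complex.ofReal_zero, zero_mul]
      rw [Complex.real_smul]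
      have htc : (t : ℂ) ≠ 0 := Complex.ofReal_ne_zero.mpr ht'
      rw [Complex.ofReal_inv, ← mul_assoc, inv_mul_cancel₀ htc, one_mul]

    exact Tendsto.congr' heq.symm (hcont.tendsto.mono_left nhdsWithin_le_nhds)
end
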